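/- arXiv:1607.03787 — 2 statements merged into one kernel-verified Lean document; each statement's English description precedes it below -/
import Mathlib

section
/- Let K/F be a Galois extension of number fields, σ ∈ Gal(K/F), δ an F-linear left σ-derivation of K with δ(O_K) ⊆ O_K, and f ∈ O_K[t;σ,δ] monic of degree m which is irreducible in K[t;σ,δ]. Then Λ = O_K[t;σ,δ]/O_K[t;σ,δ]f, which as a left O_K-module equals O_K ⊕ O_K t ⊕ ⋯ ⊕ O_K t^{m−1}, is closed under the multiplication of the Petit algebra S_f = K[t;σ,δ]/K[t;σ,δ]f, contains 1, is a finitely generated O_F-module containing an F-basis of S_f (hence is an O_F-order in S_f), satisfies Λ ⊗_{O_F} K ≅ S_f as K-modules, and Λ has no zero divisors. -/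
/-- A presentation of the skew polynomial ring `S[t;σ,δ]`: a ring `R` together with a
ring homomorphism `C : S →+* R`, a distinguished element `X` (playing the role of `t`)
satisfying the twisted commutation rule `X * C a = C (σ a) * X + C (δ a)`, and such that
every element of `R` is in a unique way a finite sum `∑ C aᵢ * X ^ i`. -/
structure SkewPolyRing (S : Type*) [Ring S] (σ : S →+* S) (δ : S → S)
    (R : Type*) [Ring R] where
  C : S →+* R
  X : R
  X_mul : ∀ a : S, X * C a = C (σ a) * X + C (δ a)
  coeff : R ≃+ (ℕ →₀ S)
  coeff_symm_apply : ∀ p : ℕ →₀ S, coeff.symm p = p.sum fun i a => C a * X ^ i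

namespace SkewPolyRing

variable {S : Type*} [Ring S] {σ : S →+* S} {δ : S → S} {R : Type*} [Ring R]

/-- The degree of a skew polynomial, with `deg 0 = ⊥`. -/
noncomputable def deg (P : SkewPolyRing S σ δ R) (x : R) : WithBot ℕ :=
  (P.coeff x).support.max

/-- The leading coefficient of a skew polynomial. -/
noncomputable def lcoeff (P : SkewPolyRing S σ δ R) (x : R) : S :=
  P.coeff x ((P.deg x).unbotD 0)

/-- `f` is monic of degree `m`. -/
def Monic (P : SkewPolyRing S σ δ R) (f : R) (m : ℕ) : Prop :=
  P.deg f = (m : WithBot ℕ) ∧ P.coeff f m = 1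

open Classical in
/-- The remainder of right division by `f`. -/
noncomputable def modr (P : SkewPolyRing S σ δ R) (f g : R) : R :=
  if h : ∃ qr : R × R, g = qr.1 * f + qr.2 ∧ P.deg qr.2 < P.deg f then
    (Classical.choose h).2
  else g

/-- The multiplication `x ∘ y = (x * y) mod_r f` of the Petit algebra `S_f`. -/
noncomputable def pmul (P : SkewPolyRing S σ δ R) (f x y : R) : R :=
  P.modr f (x * y)

/-- The element of `S_f` with coefficient vector `c ∈ S^m`. -/
def ofVec (P : SkewPolyRing S σ δ R) {m : ℕ} (c : Fin m → S) : R :=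
  ∑ i : Fin m, P.C (c i) * P.X ^ (i : ℕ)

end SkewPolyRing

/-- `δ` is a left `σ`-derivation of `S`. -/
def IsLeftSigmaDerivation {S : Type*} [Ring S] (σ : S →+* S) (δ : S → S) : Prop :=
  (∀ a b : S, δ (a + b) = δ a + δ b) ∧ ∀ a b : S, δ (a * b) = σ a * δ b + δ a * b

namespace SkewPolyRing

variable {S : Type*} [Ring S] {σ : S →+* S} {δ : S → S} {R : Type*} [Ring R]

section Aux
variable {K : Type*} [Field K] {σ : K →+* K} {δ : K → K} {R : Type*} [Ring R]
variable (P : SkewPolyRing K σ δ R)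

/-- degree `< n` -/
def SPdlt (x : R) (n : ℕ) : Prop := ∀ j, n ≤ j → P.coeff x j = 0

/-- exact degree `d` -/
def SPdeg (x : R) (d : ℕ) : Prop := P.SPdlt x (d + 1) ∧ P.coeff x d ≠ 0

/-- integral coefficients -/
def SPint (x : R) : Prop := ∀ j, IsIntegral ℤ (P.coeff x j)

theorem spx_coeff_symm_single (a : K) (i : ℕ) :
    P.coeff.symm (Finsupp.single i a) = P.C a * P.X ^ i := by
  rw [P.coeff_symm_apply, Finsupp.sum_single_index]
  simp

theorem spx_coeff_C_mul_pow (a : K) (i : ℕ) :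
    P.coeff (P.C a * P.X ^ i) = Finsupp.single i a := by
  rw [← spx_coeff_symm_single]; exact P.coeff.apply_symm_apply _

theorem spx_sum_repr (x : R) :
    x = (P.coeff x).sum fun i a => P.C a * P.X ^ i := by
  rw [← P.coeff_symm_apply]; exact (P.coeff.symm_apply_apply x).symm

theorem spx_coeff_C_mul (a : K) (x : R) (j : ℕ) :
    P.coeff (P.C a * x) j = a * P.coeff x j := by
  have h : P.C a * x = P.coeff.symm ((P.coeff x).mapRange (a * ·) (mul_zero a)) := by
    rw [P.coeff_symm_apply, Finsupp.sum_mapRange_index (fun i => by simp)]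
    conv_lhs => rw [spx_sum_repr P x]
    rw [Finsupp.mul_sum]
    exact Finsupp.sum_congr fun i b => by rw [← mul_assoc, ← map_mul]
  rw [h, P.coeff.apply_symm_apply, Finsupp.mapRange_apply]

theorem spx_coeff_X_mul (h0 : δ 0 = 0) (x : R) :
    P.coeff (P.X * x) =
      Finsupp.mapDomain Nat.succ ((P.coeff x).mapRange σ (map_zero σ)) +
        (P.coeff x).mapRange δ h0 := by
  have h : P.X * x = P.coeff.symm (Finsupp.mapDomain Nat.succ ((P.coeff x).mapRange σ (map_zero σ))
      + (P.coeff x).mapRange δ h0) := by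
    rw [map_add, P.coeff_symm_apply, P.coeff_symm_apply]
    rw [Finsupp.sum_mapDomain_index (fun b => by simp) (fun b m₁ m₂ => by rw [map_add, add_mul])]
    rw [Finsupp.sum_mapRange_index (fun i => by simp), Finsupp.sum_mapRange_index (fun i => by simp)]
    conv_lhs => rw [spx_sum_repr P x]
    rw [Finsupp.mul_sum, ← Finsupp.sum_add]
    refine Finsupp.sum_congr fun i _ => ?_
    rw [← mul_assoc, P.X_mul, add_mul, mul_assoc, ← pow_succ']
  rw [h, P.coeff.apply_symm_apply]

theorem spx_coeff_X_mul_zero (h0 : δ 0 = 0) (x : R) :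
    P.coeff (P.X * x) 0 = δ (P.coeff x 0) := by
  rw [spx_coeff_X_mul P h0, Finsupp.add_apply, Finsupp.mapRange_apply,
    Finsupp.mapDomain_notin_range]
  · rw [zero_add]
  · rintro ⟨j, hj⟩; exact Nat.succ_ne_zero j hj

theorem spx_coeff_X_mul_succ (h0 : δ 0 = 0) (x : R) (j : ℕ) :
    P.coeff (P.X * x) (j + 1) = σ (P.coeff x j) + δ (P.coeff x (j + 1)) := by
  rw [spx_coeff_X_mul P h0, Finsupp.add_apply, Finsupp.mapRange_apply]
  congr 1
  have : (j + 1) = Nat.succ j := rfl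
  rw [this, Finsupp.mapDomain_apply Nat.succ_injective, Finsupp.mapRange_apply]


theorem spx_dlt_mono {x : R} {n n' : ℕ} (h : P.SPdlt x n) (hnn : n ≤ n') : P.SPdlt x n' :=
  fun j hj => h j (le_trans hnn hj)

theorem spx_dlt_pow_mul (h0 : δ 0 = 0) {y : R} {n : ℕ} (hy : P.SPdlt y n) (i : ℕ) :
    P.SPdlt (P.X ^ i * y) (n + i) := by
  induction i generalizing y n with
  | zero => rw [pow_zero, one_mul]; exact hy
  | succ i ih =>
    have hXy : P.SPdlt (P.X * y) (n + 1) := by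
      intro j hj
      obtain ⟨j', rfl⟩ := Nat.exists_eq_add_of_le (le_trans (Nat.le_add_left 1 n) hj)
      rw [add_comm 1 j', spx_coeff_X_mul_succ P h0, hy j' (by omega), hy (j' + 1) (by omega),
        map_zero, h0, add_zero]
    have := ih hXy
    rw [pow_succ, mul_assoc]
    intro j hj
    exact this j (by omega)

theorem spx_top_pow_mul (h0 : δ 0 = 0) {y : R} {e : ℕ} (hy : P.SPdlt y (e + 1)) (i : ℕ) :
    P.coeff (P.X ^ i * y) (e + i) = σ^[i] (P.coeff y e) := by
  induction i generalizing y e with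
  | zero => rw [pow_zero, one_mul]; rfl
  | succ i ih =>
    have hXy : P.SPdlt (P.X * y) (e + 2) := by
      have := spx_dlt_pow_mul P h0 hy 1
      rw [pow_one] at this
      exact fun j hj => this j (by omega)
    have htop : P.coeff (P.X * y) (e + 1) = σ (P.coeff y e) := by
      rw [spx_coeff_X_mul_succ P h0, hy (e + 1) (le_refl _), h0, add_zero]
    rw [pow_succ, mul_assoc]
    have := ih (y := P.X * y) (e := e + 1) (fun j hj => hXy j (by omega))
    rw [htop] at this
    rw [show e + (i + 1) = e + 1 + i by omega, this, ← Function.iterate_succ_apply]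

theorem spx_int_pow_mul (h0 : δ 0 = 0)
    (hσ : ∀ z : K, IsIntegral ℤ z → IsIntegral ℤ (σ z))
    (hδ : ∀ z : K, IsIntegral ℤ z → IsIntegral ℤ (δ z))
    {y : R} (hy : P.SPint y) (i : ℕ) : P.SPint (P.X ^ i * y) := by
  induction i generalizing y with
  | zero => rw [pow_zero, one_mul]; exact hy
  | succ i ih =>
    have hXy : P.SPint (P.X * y) := by
      intro j
      cases j with
      | zero => rw [spx_coeff_X_mul_zero P h0]; exact hδ _ (hy 0)
      | succ j =>
        rw [spx_coeff_X_mul_succ P h0]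
        exact (hσ _ (hy j)).add (hδ _ (hy (j + 1)))
    rw [pow_succ, mul_assoc]
    exact ih hXy

theorem spx_mul_eq_sum (x y : R) :
    x * y = (P.coeff x).sum fun i a => P.C a * (P.X ^ i * y) := by
  conv_lhs => rw [spx_sum_repr P x]
  rw [Finsupp.sum_mul]
  exact Finsupp.sum_congr fun i _ => by rw [mul_assoc]

theorem spx_coeff_mul (x y : R) (j : ℕ) :
    P.coeff (x * y) j = (P.coeff x).sum fun i a => a * P.coeff (P.X ^ i * y) j := by
  rw [spx_mul_eq_sum P x y, Finsupp.sum, Finsupp.sum, map_sum, Finset.sum_apply']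
  exact Finset.sum_congr rfl fun i _ => spx_coeff_C_mul P _ _ _

theorem spx_dlt_mul (h0 : δ 0 = 0) {x y : R} {n k : ℕ}
    (hx : P.SPdlt x (n + 1)) (hy : P.SPdlt y k) : P.SPdlt (x * y) (n + k) := by
  intro j hj
  rw [spx_coeff_mul, Finsupp.sum]
  refine Finset.sum_eq_zero fun i hi => ?_
  have hin : i ≤ n := by
    by_contra hc
    exact (Finsupp.mem_support_iff.mp hi) (hx i (by omega))
  rw [spx_dlt_pow_mul P h0 hy i j (by omega), mul_zero]

theorem spx_top_mul (h0 : δ 0 = 0) {x y : R} {d e : ℕ}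
    (hx : P.SPdlt x (d + 1)) (hy : P.SPdlt y (e + 1)) :
    P.coeff (x * y) (d + e) = P.coeff x d * σ^[d] (P.coeff y e) := by
  have h1 : ∀ i ∈ (P.coeff x).support, i ≠ d →
      P.coeff x i * P.coeff (P.X ^ i * y) (d + e) = 0 := by
    intro i hi hne
    have hin : i ≤ d := by
      by_contra hc
      exact (Finsupp.mem_support_iff.mp hi) (hx i (by omega))
    rw [spx_dlt_pow_mul P h0 hy i (d + e) (by omega), mul_zero]
  have h2 : d ∉ (P.coeff x).support →
      P.coeff x d * P.coeff (P.X ^ d * y) (d + e) = 0 := fun hd => by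
    rw [Finsupp.notMem_support_iff.mp hd, zero_mul]
  rw [spx_coeff_mul, Finsupp.sum]
  rw [Finset.sum_eq_single d h1 h2, show d + e = e + d by omega, spx_top_pow_mul P h0 hy d]

theorem spx_int_sum {ι : Type*} (s : Finset ι) (g : ι → K)
    (h : ∀ i ∈ s, IsIntegral ℤ (g i)) : IsIntegral ℤ (∑ i ∈ s, g i) := by
  classical
  induction s using Finset.induction with
  | empty => simpa using isIntegral_zero
  | insert _ _ hni ih =>
    rw [Finset.sum_insert hni]
    exact (h _ (Finset.mem_insert_self _ _)).add
      (ih fun i hi => h i (Finset.mem_insert_of_mem hi))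

theorem spx_int_mul (h0 : δ 0 = 0)
    (hσ : ∀ z : K, IsIntegral ℤ z → IsIntegral ℤ (σ z))
    (hδ : ∀ z : K, IsIntegral ℤ z → IsIntegral ℤ (δ z))
    {x y : R} (hx : P.SPint x) (hy : P.SPint y) : P.SPint (x * y) := by
  intro j
  rw [spx_coeff_mul, Finsupp.sum]
  exact spx_int_sum _ _ fun i _ => (hx i).mul (spx_int_pow_mul P h0 hσ hδ hy i j)
theorem spx_deg_lt_iff (x : R) (n : ℕ) :
    P.deg x < (n : WithBot ℕ) ↔ P.SPdlt x n := by
  constructor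
  · intro h j hj
    by_contra hc
    have hjs : j ∈ (P.coeff x).support := Finsupp.mem_support_iff.mpr hc
    have : (j : WithBot ℕ) ≤ P.deg x := Finset.le_max hjs
    have : (j : WithBot ℕ) < (n : WithBot ℕ) := lt_of_le_of_lt this h
    rw [Nat.cast_lt] at this
    omega
  · intro h
    rcases Finset.eq_empty_or_nonempty (P.coeff x).support with he | hne
    · rw [SkewPolyRing.deg, he]
      exact lt_of_le_of_lt bot_le (WithBot.bot_lt_coe n)
    · rw [SkewPolyRing.deg, ← Finset.coe_max' hne]
      have hlt : (P.coeff x).support.max' hne < n := by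
        rw [Finset.max'_lt_iff]
        intro j hj
        by_contra hc
        exact (Finsupp.mem_support_iff.mp hj) (h j (by omega))
      exact WithBot.coe_lt_coe.mpr hlt

theorem spx_ne_zero_of_coeff {x : R} {j : ℕ} (h : P.coeff x j ≠ 0) : x ≠ 0 := by
  intro hx
  rw [hx, map_zero] at h
  exact h rfl

theorem spx_exists_deg {x : R} (hx : x ≠ 0) : ∃ d, P.SPdeg x d := by
  have hc : P.coeff x ≠ 0 := fun h => hx (by
    have := congrArg P.coeff.symm h
    rwa [P.coeff.symm_apply_apply, map_zero] at this)
  have hne : (P.coeff x).support.Nonempty := by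
    rw [Finsupp.support_nonempty_iff]; exact hc
  refine ⟨(P.coeff x).support.max' hne, fun j hj => ?_, ?_⟩
  · by_contra hcj
    have := Finset.le_max' _ j (Finsupp.mem_support_iff.mpr hcj)
    omega
  · exact Finsupp.mem_support_iff.mp (Finset.max'_mem _ hne)

theorem spx_deg_unique {x : R} {d d' : ℕ} (h : P.SPdeg x d) (h' : P.SPdeg x d') : d = d' := by
  by_contra hne
  rcases Nat.lt_or_ge d d' with hlt | hge
  · exact h'.2 (h.1 d' (by omega))
  · exact h.2 (h'.1 d (by omega))

theorem spx_iterate_ne_zero (d : ℕ) {c : K} (hc : c ≠ 0) : σ^[d] c ≠ 0 := by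
  intro h
  have hinj : Function.Injective (σ^[d]) := Function.Injective.iterate σ.injective d
  have h0 : σ^[d] (0 : K) = 0 := Function.iterate_fixed (map_zero σ) d
  exact hc (hinj (h.trans h0.symm))

theorem spx_deg_mul (h0 : δ 0 = 0) {x y : R} {d e : ℕ}
    (hx : P.SPdeg x d) (hy : P.SPdeg y e) : P.SPdeg (x * y) (d + e) := by
  constructor
  · exact spx_dlt_mul P h0 (n := d) (k := e + 1) hx.1 hy.1
  · rw [spx_top_mul P h0 hx.1 hy.1]
    exact mul_ne_zero hx.2 (spx_iterate_ne_zero d hy.2)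

include P in
theorem spx_mul_ne_zero (h0 : δ 0 = 0) {x y : R} (hx : x ≠ 0) (hy : y ≠ 0) : x * y ≠ 0 := by
  obtain ⟨d, hd⟩ := spx_exists_deg P hx
  obtain ⟨e, he⟩ := spx_exists_deg P hy
  exact spx_ne_zero_of_coeff P (spx_deg_mul P h0 hd he).2

theorem spx_deg_one : P.SPdeg 1 0 := by
  have h : P.coeff (1 : R) = Finsupp.single 0 1 := by
    have := spx_coeff_C_mul_pow P (1 : K) 0
    rwa [map_one, pow_zero, mul_one] at this
  constructor
  · intro j hj
    rw [h, Finsupp.single_apply, if_neg (by omega)]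
  · rw [h, Finsupp.single_apply, if_pos rfl]
    exact one_ne_zero

include P in
theorem spx_one_ne_zero : (1 : R) ≠ 0 := spx_ne_zero_of_coeff P (spx_deg_one P).2

theorem spx_eq_zero {x : R} (h : P.SPdlt x 0) : x = 0 := by
  have : P.coeff x = 0 := Finsupp.ext fun j => h j (Nat.zero_le j)
  have := congrArg P.coeff.symm this
  rwa [P.coeff.symm_apply_apply, map_zero] at this

theorem spx_dlt_sub {x y : R} {n : ℕ} (hx : P.SPdlt x n) (hy : P.SPdlt y n) :
    P.SPdlt (x - y) n := by
  intro j hj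
  rw [map_sub, Finsupp.sub_apply, hx j hj, hy j hj, sub_zero]

theorem spx_deg_ge {z : R} {n d : ℕ} (hnd : ¬ P.SPdlt z n) (hd : P.SPdeg z d) : n ≤ d := by
  by_contra hc
  unfold SkewPolyRing.SPdlt at hnd
  push_neg at hnd
  obtain ⟨j, hj, hne⟩ := hnd
  exact hne (hd.1 j (by omega))

/-- Right division: general version. -/
theorem spx_div (h0 : δ 0 = 0) {g : R} {e : ℕ} (hg : P.SPdeg g e) :
    ∀ n : ℕ, ∀ z : R, P.SPdlt z n → ∃ q r : R, z = q * g + r ∧ P.SPdlt r e := by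
  intro n
  induction n with
  | zero =>
    intro z hz
    exact ⟨0, 0, by rw [spx_eq_zero P hz, zero_mul, add_zero], fun j _ => by rw [map_zero]; rfl⟩
  | succ n ih =>
    intro z hz
    rcases Nat.lt_or_ge n e with hne | hen
    · exact ⟨0, z, by rw [zero_mul, zero_add], spx_dlt_mono P hz (by omega)⟩
    · set c : K := P.coeff z n * (σ^[n - e] (P.coeff g e))⁻¹ with hc
      set z' : R := z - P.C c * (P.X ^ (n - e) * g) with hz'
      have hdlt : P.SPdlt (P.C c * (P.X ^ (n - e) * g)) (n + 1) := by
        intro j hj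
        rw [spx_coeff_C_mul]
        rw [spx_dlt_pow_mul P h0 hg.1 (n - e) j (by omega), mul_zero]
      have hz'n : P.SPdlt z' n := by
        intro j hj
        rcases Nat.lt_or_ge j (n + 1) with hj1 | hj1
        · have hjn : j = n := by omega
          have htp : P.coeff (P.X ^ (n - e) * g) n = σ^[n - e] (P.coeff g e) := by
            have := spx_top_pow_mul P h0 hg.1 (n - e)
            rwa [show e + (n - e) = n by omega] at this
          rw [hjn, hz', map_sub, Finsupp.sub_apply, spx_coeff_C_mul, htp, hc,
            mul_assoc, inv_mul_cancel₀ (spx_iterate_ne_zero (n - e) hg.2), mul_one, sub_self]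
        · rw [hz', map_sub, Finsupp.sub_apply, hz j hj1, hdlt j hj1, sub_zero]
      obtain ⟨q', r', heq, hr'⟩ := ih z' hz'n
      refine ⟨q' + P.C c * P.X ^ (n - e), r', ?_, hr'⟩
      have h2 : (q' + P.C c * P.X ^ (n - e)) * g + r' =
          (q' * g + r') + P.C c * (P.X ^ (n - e) * g) := by
        rw [add_mul, mul_assoc]; abel
      rw [h2, ← heq, hz']
      abel

/-- Right division by the monic integral `f`, preserving integrality. -/
theorem spx_div_int (h0 : δ 0 = 0)
    (hσ : ∀ z : K, IsIntegral ℤ z → IsIntegral ℤ (σ z))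
    (hδ : ∀ z : K, IsIntegral ℤ z → IsIntegral ℤ (δ z))
    {f : R} {m : ℕ} (hfd : P.SPdlt f (m + 1)) (hfm : P.coeff f m = 1) (hfi : P.SPint f) :
    ∀ n : ℕ, ∀ z : R, P.SPdlt z n → P.SPint z →
      ∃ q r : R, z = q * f + r ∧ P.SPdlt r m ∧ P.SPint r := by
  have hfdeg : P.SPdeg f m := ⟨hfd, by rw [hfm]; exact one_ne_zero⟩
  intro n
  induction n with
  | zero =>
    intro z hz _
    refine ⟨0, 0, by rw [spx_eq_zero P hz, zero_mul, add_zero], fun j _ => by rw [map_zero]; rfl,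
      fun j => by rw [map_zero]; exact isIntegral_zero⟩
  | succ n ih =>
    intro z hz hzi
    rcases Nat.lt_or_ge n m with hnm | hmn
    · exact ⟨0, z, by rw [zero_mul, zero_add], spx_dlt_mono P hz (by omega), hzi⟩
    · set c : K := P.coeff z n with hc
      set z' : R := z - P.C c * (P.X ^ (n - m) * f) with hz'
      have hctop : P.coeff (P.C c * (P.X ^ (n - m) * f)) n = c := by
        have htp : P.coeff (P.X ^ (n - m) * f) n = σ^[n - m] (P.coeff f m) := by
          have := spx_top_pow_mul P h0 hfd (n - m)
          rwa [show m + (n - m) = n by omega] at this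
        rw [spx_coeff_C_mul, htp, hfm, Function.iterate_fixed (map_one σ) (n - m), mul_one]
      have hdlt : P.SPdlt (P.C c * (P.X ^ (n - m) * f)) (n + 1) := by
        intro j hj
        rw [spx_coeff_C_mul]
        rw [spx_dlt_pow_mul P h0 hfd (n - m) j (by omega), mul_zero]
      have hz'n : P.SPdlt z' n := by
        intro j hj
        rcases Nat.lt_or_ge j (n + 1) with hj1 | hj1
        · have hjn : j = n := by omega
          rw [hjn, hz', map_sub, Finsupp.sub_apply, hctop, hc, sub_self]
        · rw [hz', map_sub, Finsupp.sub_apply, hz j hj1, hdlt j hj1, sub_zero]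
      have hz'i : P.SPint z' := by
        intro j
        rw [hz', map_sub, Finsupp.sub_apply]
        refine (hzi j).sub ?_
        rw [spx_coeff_C_mul]
        exact (hzi n).mul (spx_int_pow_mul P h0 hσ hδ hfi (n - m) j)
      obtain ⟨q', r', heq, hr', hri⟩ := ih z' hz'n hz'i
      refine ⟨q' + P.C c * P.X ^ (n - m), r', ?_, hr', hri⟩
      have h2 : (q' + P.C c * P.X ^ (n - m)) * f + r' =
          (q' * f + r') + P.C c * (P.X ^ (n - m) * f) := by
        rw [add_mul, mul_assoc]; abel
      rw [h2, ← heq, hz']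
      abel
theorem spx_deg_of_deg_eq {f : R} {m : ℕ} (hf : P.deg f = (m : WithBot ℕ)) : P.SPdeg f m := by
  constructor
  · intro j hj
    by_contra hc
    have h1 : (j : WithBot ℕ) ≤ P.deg f := Finset.le_max (Finsupp.mem_support_iff.mpr hc)
    rw [hf, Nat.cast_le] at h1
    omega
  · exact Finsupp.mem_support_iff.mp (Finset.mem_of_max hf)

theorem spx_modr_eq (h0 : δ 0 = 0) {f : R} {m : ℕ}
    (hdegf : P.deg f = (m : WithBot ℕ)) (g q r : R)
    (hg : g = q * f + r) (hr : P.SPdlt r m) : P.modr f g = r := by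
  have hfd : P.SPdeg f m := spx_deg_of_deg_eq P hdegf
  have hex : ∃ qr : R × R, g = qr.1 * f + qr.2 ∧ P.deg qr.2 < P.deg f :=
    ⟨(q, r), hg, by rw [hdegf]; exact (spx_deg_lt_iff P r m).mpr hr⟩
  rw [SkewPolyRing.modr, dif_pos hex]
  obtain ⟨hg', hr'⟩ := Classical.choose_spec hex
  set q' := (Classical.choose hex).1 with hq'
  set r' := (Classical.choose hex).2 with hr'def
  have hr'm : P.SPdlt r' m := (spx_deg_lt_iff P r' m).mp (by rwa [hdegf] at hr')
  have h3 : q * f + r = q' * f + r' := hg.symm.trans hg'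
  have key : q = q' := by
    by_contra hne
    have hq : q - q' ≠ 0 := sub_ne_zero_of_ne hne
    obtain ⟨d, hd⟩ := spx_exists_deg P hq
    have hmul : P.SPdeg ((q - q') * f) (d + m) := spx_deg_mul P h0 hd hfd
    have hqq : (q - q') * f = r' - r := by
      rw [sub_mul, sub_eq_sub_iff_add_eq_add, h3]
      abel
    have hzz : P.coeff ((q - q') * f) (d + m) = 0 := by
      rw [hqq]; exact spx_dlt_sub P hr'm hr (d + m) (by omega)
    exact hmul.2 hzz
  rw [key] at h3
  exact (add_left_cancel h3).symm

include P in
theorem spx_coprime (h0 : δ 0 = 0) {f : R} {m : ℕ} (hfd : P.SPdeg f m)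
    (hirr : ∀ g h : R, P.SPdlt g m → P.SPdlt h m → f ≠ g * h)
    {y : R} (hy0 : y ≠ 0) (hym : P.SPdlt y m) :
    ∃ u v : R, u * f + v * y = 1 := by
  classical
  obtain ⟨ey, hey⟩ := spx_exists_deg P hy0
  have hQ : ∃ d : ℕ, ∃ z u v : R, z = u * f + v * y ∧ P.SPdeg z d :=
    ⟨ey, y, 0, 1, by rw [zero_mul, one_mul, zero_add], hey⟩
  obtain ⟨z0, u0, v0, hz0, hz0d⟩ := Nat.find_spec hQ
  set d0 := Nat.find hQ with hd0
  have hz0ne : z0 ≠ 0 := spx_ne_zero_of_coeff P hz0d.2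
  obtain ⟨q, r, hqr, hr⟩ := spx_div P h0 hz0d (m + 1) f hfd.1
  have hr0 : r = 0 := by
    by_contra hrne
    obtain ⟨dr, hdr⟩ := spx_exists_deg P hrne
    have hdrlt : dr < d0 := by
      have h2 := hdr.2
      by_contra hc
      push_neg at hc
      exact h2 (hr dr (by omega))
    refine Nat.find_min hQ hdrlt ⟨r, 1 - q * u0, -(q * v0), ?_, hdr⟩
    have h4 : r = f - q * (u0 * f + v0 * y) := by rw [← hz0, hqr]; abel
    rw [h4, mul_add, ← mul_assoc, ← mul_assoc, sub_mul, one_mul, neg_mul]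
    abel
  rw [hr0, add_zero] at hqr
  rcases Nat.eq_zero_or_pos d0 with h00 | hpos
  · rw [h00] at hz0d
    set c := P.coeff z0 0 with hcdef
    have hzc : z0 = P.C c := by
      have h1 : P.coeff z0 = Finsupp.single 0 c := by
        ext j
        cases j with
        | zero => rw [Finsupp.single_eq_same]
        | succ j => rw [hz0d.1 (j + 1) (by omega), Finsupp.single_apply, if_neg (by omega)]
      have h2 := congrArg P.coeff.symm h1
      rwa [P.coeff.symm_apply_apply, spx_coeff_symm_single, pow_zero, mul_one] at h2
    have hcne : c ≠ 0 := hz0d.2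
    refine ⟨P.C c⁻¹ * u0, P.C c⁻¹ * v0, ?_⟩
    have h5 : P.C c⁻¹ * z0 = 1 := by rw [hzc, ← map_mul, inv_mul_cancel₀ hcne, map_one]
    calc P.C c⁻¹ * u0 * f + P.C c⁻¹ * v0 * y
        = P.C c⁻¹ * (u0 * f + v0 * y) := by rw [mul_add, mul_assoc, mul_assoc]
      _ = 1 := by rw [← hz0, h5]
  · exfalso
    have hqne : q ≠ 0 := by
      intro h
      rw [h, zero_mul] at hqr
      exact spx_ne_zero_of_coeff P hfd.2 hqr
    obtain ⟨dq, hdq⟩ := spx_exists_deg P hqne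
    have hprod : P.SPdeg f (dq + d0) := by rw [hqr]; exact spx_deg_mul P h0 hdq hz0d
    have hdm : dq + d0 = m := spx_deg_unique P hprod hfd
    have heym : ey < m := by
      have h2 := hey.2
      by_contra hc
      push_neg at hc
      exact h2 (hym ey (by omega))
    have hd0m : d0 < m :=
      lt_of_le_of_lt (Nat.find_le ⟨y, 0, 1, by rw [zero_mul, one_mul, zero_add], hey⟩) heym
    exact hirr q z0 (spx_dlt_mono P hdq.1 (by omega)) (spx_dlt_mono P hz0d.1 (by omega)) hqr

include P in
theorem spx_claim (h0 : δ 0 = 0) :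
    ∀ e : ℕ, ∀ h : R, P.SPdeg h e → ∀ g : R, ∀ dg : ℕ, P.SPdeg g dg →
      (∃ u v : R, u * g + v * h = 1) → ∀ z w : R, z ≠ 0 → z * h = w * g →
        ¬ P.SPdlt z dg := by
  intro e
  induction e using Nat.strong_induction_on with
  | _ e ih =>
  intro h hh g dg hg hcop z w hz hzw
  have hhne : h ≠ 0 := spx_ne_zero_of_coeff P hh.2
  have hgne : g ≠ 0 := spx_ne_zero_of_coeff P hg.2
  have hwne : w ≠ 0 := by
    intro hw
    rw [hw, zero_mul] at hzw
    exact spx_mul_ne_zero P h0 hz hhne hzw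
  obtain ⟨dz, hdz⟩ := spx_exists_deg P hz
  obtain ⟨dw, hdw⟩ := spx_exists_deg P hwne
  have hdeq : dz + e = dw + dg := by
    have h1 : P.SPdeg (z * h) (dz + e) := spx_deg_mul P h0 hdz hh
    have h2 : P.SPdeg (z * h) (dw + dg) := by rw [hzw]; exact spx_deg_mul P h0 hdw hg
    exact spx_deg_unique P h1 h2
  have hconc : e ≤ dw → ¬ P.SPdlt z dg := by
    intro hle hdlt
    exact hdz.2 (hdlt dz (by omega))
  rcases Nat.eq_zero_or_pos e with he0 | hepos
  · exact hconc (by omega)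
  · obtain ⟨q, r, hqr, hr⟩ := spx_div P h0 hh (dg + 1) g hg.1
    by_cases hr0 : r = 0
    · exfalso
      rw [hr0, add_zero] at hqr
      obtain ⟨u, v, huv⟩ := hcop
      have h1 : (u * q + v) * h = 1 := by
        rw [add_mul, mul_assoc, ← hqr, huv]
      have huqv : u * q + v ≠ 0 := by
        intro hzz
        rw [hzz, zero_mul] at h1
        exact spx_one_ne_zero P h1.symm
      obtain ⟨t, ht⟩ := spx_exists_deg P huqv
      have h2 : P.SPdeg ((u * q + v) * h) (t + e) := spx_deg_mul P h0 ht hh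
      have h3 : P.SPdeg ((u * q + v) * h) 0 := by rw [h1]; exact spx_deg_one P
      have := spx_deg_unique P h2 h3
      omega
    · obtain ⟨er, her⟩ := spx_exists_deg P hr0
      have herlt : er < e := by
        have h2 := her.2
        by_contra hc
        push_neg at hc
        exact h2 (hr er (by omega))
      obtain ⟨u, v, huv⟩ := hcop
      have hgr : g - q * h = r := by rw [hqr]; abel
      have hcop' : ∃ u' v' : R, u' * h + v' * r = 1 := by
        refine ⟨u * q + v, u, ?_⟩
        have h5 : (u * q + v) * h + u * r = u * (q * h + r) + v * h := by
          rw [mul_add, ← mul_assoc, add_mul]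
          abel
        rw [h5, ← hqr, huv]
      have hrel : w * r = (z - w * q) * h := by
        calc w * r = w * (g - q * h) := by rw [hgr]
          _ = w * g - w * (q * h) := mul_sub _ _ _
          _ = z * h - w * q * h := by rw [← hzw, mul_assoc]
          _ = (z - w * q) * h := (sub_mul _ _ _).symm
      have hnd := ih er herlt r her h e hh hcop' w (z - w * q) hwne hrel
      exact hconc (spx_deg_ge P hnd hdw)

theorem spx_coeff_sum_vec {m : ℕ} (c : Fin m → K) (j : ℕ) :
    P.coeff (∑ i : Fin m, P.C (c i) * P.X ^ (i : ℕ)) j =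
      if h : j < m then c ⟨j, h⟩ else 0 := by
  rw [map_sum, Finset.sum_apply']
  by_cases h : j < m
  · rw [dif_pos h]
    rw [Finset.sum_eq_single ⟨j, h⟩ (fun i _ hne => ?_) (fun hn => absurd (Finset.mem_univ _) hn)]
    · rw [spx_coeff_C_mul_pow, Finsupp.single_eq_same]
    · rw [spx_coeff_C_mul_pow, Finsupp.single_apply, if_neg]
      intro hij
      exact hne (Fin.ext hij)
  · rw [dif_neg h]
    refine Finset.sum_eq_zero fun i _ => ?_
    rw [spx_coeff_C_mul_pow, Finsupp.single_apply, if_neg]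
    intro hij
    omega
    
theorem spx_repr_dlt {x : R} {m : ℕ} (hx : P.SPdlt x m) :
    x = ∑ i : Fin m, P.C (P.coeff x (i : ℕ)) * P.X ^ (i : ℕ) := by
  apply P.coeff.injective
  ext j
  rw [spx_coeff_sum_vec]
  by_cases h : j < m
  · rw [dif_pos h]
  · rw [dif_neg h, hx j (by omega)]

end Aux
end SkewPolyRing

open SkewPolyRing

open scoped NumberField

set_option synthInstance.maxHeartbeats 800000
set_option maxHeartbeats 1600000

/-- the natural order `Λ = O_K[t;σ,δ]/O_K[t;σ,δ]f` in the Petit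
algebra `S_f = K[t;σ,δ]/K[t;σ,δ]f`. Here `Λ` is realized as the set of elements of
`S_f` all of whose coefficients are algebraic integers. It is a ring (for the Petit
multiplication), equals `O_K ⊕ O_K t ⊕ ⋯ ⊕ O_K t^{m-1}` as a left `O_K`-module, is a
finitely generated `O_F`-module containing an `F`-basis of `S_f` (hence an `O_F`-order),
satisfies `Λ ⊗_{O_F} K ≅ S_f` (rendered: the `t^i`, which lie in `Λ`, form a `K`-basis
of `S_f`), and has no zero divisors. -/
theorem natural_order_of_petit_algebra
    (F K : Type*) [Field F] [Field K] [NumberField F] [NumberField K]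
    [Algebra F K] [IsGalois F K] (σ : K ≃ₐ[F] K)
    (δ : K → K)
    (hadd : ∀ a b : K, δ (a + b) = δ a + δ b)
    (hlin : ∀ (c : F) (a : K), δ (algebraMap F K c * a) = algebraMap F K c * δ a)
    (hleib : ∀ a b : K, δ (a * b) = σ a * δ b + δ a * b)
    (hδint : ∀ x : K, IsIntegral ℤ x → IsIntegral ℤ (δ x))
    {R : Type*} [Ring R] (P : SkewPolyRing K (σ : K →+* K) δ R)
    (f : R) (m : ℕ) (hm : 1 ≤ m) (hf : P.Monic f m)
    (hfint : ∀ i : ℕ, IsIntegral ℤ (P.coeff f i))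
    (hirr : ¬ ∃ g h : R, P.deg g < (m : WithBot ℕ) ∧ P.deg h < (m : WithBot ℕ) ∧ f = g * h)
    (Λ : Set R)
    (hΛ : Λ = {x : R | P.deg x < (m : WithBot ℕ) ∧ ∀ i : ℕ, IsIntegral ℤ (P.coeff x i)}) :
    -- Λ is unital and closed under addition, negation and the Petit multiplication
    ((1 : R) ∈ Λ ∧ (∀ x ∈ Λ, ∀ y ∈ Λ, x + y ∈ Λ) ∧ (∀ x ∈ Λ, -x ∈ Λ) ∧
      ∀ x ∈ Λ, ∀ y ∈ Λ, P.pmul f x y ∈ Λ) ∧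
    -- Λ = O_K ⊕ O_K t ⊕ ⋯ ⊕ O_K t^{m-1} as a left O_K-module
    (∀ x : R, x ∈ Λ ↔ ∃ c : Fin m → K, (∀ i, IsIntegral ℤ (c i)) ∧
      x = ∑ i : Fin m, P.C (c i) * P.X ^ (i : ℕ)) ∧
    -- Λ is a finitely generated O_F-module
    (∃ s : Finset R, ↑s ⊆ Λ ∧ ∀ x ∈ Λ, ∃ co : R → 𝓞 F,
      x = ∑ v ∈ s, P.C (algebraMap F K (algebraMap (𝓞 F) F (co v))) * v) ∧
    -- Λ contains an F-basis of S_f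
    (∃ s : Finset R, ↑s ⊆ Λ ∧
      (∀ x : R, P.deg x < (m : WithBot ℕ) → ∃ co : R → F,
        x = ∑ v ∈ s, P.C (algebraMap F K (co v)) * v) ∧
      (∀ co : R → F, ∑ v ∈ s, P.C (algebraMap F K (co v)) * v = 0 → ∀ v ∈ s, co v = 0)) ∧
    -- Λ ⊗_{O_F} K ≅ S_f : the powers t^i (which lie in Λ) are a K-basis of S_f
    ((∀ i : Fin m, P.X ^ (i : ℕ) ∈ Λ) ∧
      ∀ x : R, P.deg x < (m : WithBot ℕ) →
        ∃! c : Fin m → K, x = ∑ i : Fin m, P.C (c i) * P.X ^ (i : ℕ)) ∧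
    -- Λ has no zero divisors
    (∀ x ∈ Λ, ∀ y ∈ Λ, P.pmul f x y = 0 → x = 0 ∨ y = 0) := by
  classical
  have h0 : δ 0 = 0 := by
    have h1 := hadd 0 0
    rw [add_zero] at h1
    exact (left_eq_add.mp h1)
  have hσint : ∀ z : K, IsIntegral ℤ z → IsIntegral ℤ ((σ : K →+* K) z) := by
    intro z hz
    exact hz.map (σ : K →+* K).toIntAlgHom
  have hfdeg : P.SPdeg f m := spx_deg_of_deg_eq P hf.1
  have hmem : ∀ x : R, x ∈ Λ ↔ (P.SPdlt x m ∧ P.SPint x) := by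
    intro x
    rw [hΛ]
    simp only [Set.mem_setOf_eq]
    constructor
    · rintro ⟨h1, h2⟩; exact ⟨(spx_deg_lt_iff P x m).mp h1, h2⟩
    · rintro ⟨h1, h2⟩; exact ⟨(spx_deg_lt_iff P x m).mpr h1, h2⟩
  have hpmul : ∀ x y : R, P.SPdlt x m → P.SPint x → P.SPdlt y m → P.SPint y →
      ∃ q : R, x * y = q * f + P.pmul f x y ∧ P.SPdlt (P.pmul f x y) m ∧
        P.SPint (P.pmul f x y) := by
    intro x y hx hxi hy hyi
    have hx' : P.SPdlt x ((m - 1) + 1) := by rwa [show m - 1 + 1 = m by omega]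
    have hxy_dlt : P.SPdlt (x * y) (m - 1 + m) := spx_dlt_mul P h0 hx' hy
    have hxyint : P.SPint (x * y) := spx_int_mul P h0 hσint hδint hxi hyi
    obtain ⟨q, r, heq, hrd, hri⟩ := spx_div_int P h0 hσint hδint hfdeg.1 hf.2 hfint
      (m - 1 + m) (x * y) hxy_dlt hxyint
    have hmr : P.pmul f x y = r := spx_modr_eq P h0 hf.1 (x * y) q r heq hrd
    exact ⟨q, by rw [hmr]; exact heq, by rw [hmr]; exact hrd, by rw [hmr]; exact hri⟩
  have hone : P.coeff (1 : R) = Finsupp.single 0 1 := by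
    have h1 := spx_coeff_C_mul_pow P (1 : K) 0
    rwa [map_one, pow_zero, mul_one] at h1
  have hXpow : ∀ i : ℕ, P.coeff (P.X ^ i) = Finsupp.single i 1 := by
    intro i
    have h1 := spx_coeff_C_mul_pow P (1 : K) i
    rwa [map_one, one_mul] at h1
  refine ⟨⟨?_, ?_, ?_, ?_⟩, ?_, ?_, ?_, ⟨?_, ?_⟩, ?_⟩
  · -- 1 ∈ Λ
    refine (hmem 1).mpr ⟨fun j hj => ?_, fun j => ?_⟩
    · rw [hone, Finsupp.single_apply, if_neg (by omega)]
    · rw [hone, Finsupp.single_apply]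
      split_ifs
      · exact isIntegral_one
      · exact isIntegral_zero
  · -- closed under +
    intro x hx y hy
    obtain ⟨hxd, hxi⟩ := (hmem x).mp hx
    obtain ⟨hyd, hyi⟩ := (hmem y).mp hy
    refine (hmem _).mpr ⟨fun j hj => ?_, fun j => ?_⟩
    · rw [map_add, Finsupp.add_apply, hxd j hj, hyd j hj, add_zero]
    · rw [map_add, Finsupp.add_apply]
      exact (hxi j).add (hyi j)
  · -- closed under neg
    intro x hx
    obtain ⟨hxd, hxi⟩ := (hmem x).mp hx
    refine (hmem _).mpr ⟨fun j hj => ?_, fun j => ?_⟩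
    · rw [map_neg, Finsupp.neg_apply, hxd j hj, neg_zero]
    · rw [map_neg, Finsupp.neg_apply]
      exact (hxi j).neg
  · -- closed under pmul
    intro x hx y hy
    obtain ⟨hxd, hxi⟩ := (hmem x).mp hx
    obtain ⟨hyd, hyi⟩ := (hmem y).mp hy
    obtain ⟨q, _, hd, hi⟩ := hpmul x y hxd hxi hyd hyi
    exact (hmem _).mpr ⟨hd, hi⟩
  · -- description as O_K-span
    intro x
    constructor
    · intro hx
      obtain ⟨hxd, hxi⟩ := (hmem x).mp hx
      exact ⟨fun i => P.coeff x (i : ℕ), fun i => hxi (i : ℕ), spx_repr_dlt P hxd⟩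
    · rintro ⟨c, hci, rfl⟩
      refine (hmem _).mpr ⟨fun j hj => ?_, fun j => ?_⟩
      · rw [spx_coeff_sum_vec, dif_neg (by omega)]
      · rw [spx_coeff_sum_vec]
        split_ifs
        · exact hci _
        · exact isIntegral_zero
  · -- finitely generated O_F-module
    let ι := Module.Free.ChooseBasisIndex ℤ (𝓞 K)
    let B : Module.Basis ι ℤ (𝓞 K) := Module.Free.chooseBasis ℤ (𝓞 K)
    let w : ι → K := fun j => algebraMap (𝓞 K) K (B j)
    have hwint : ∀ j, IsIntegral ℤ (w j) := fun j =>
      NumberField.RingOfIntegers.isIntegral_coe (B j)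
    have hwinj : Function.Injective w :=
      NumberField.RingOfIntegers.coe_injective.comp B.injective
    have hwne : ∀ j, w j ≠ 0 := fun j => by
      intro hz
      apply B.ne_zero j
      apply NumberField.RingOfIntegers.coe_injective
      rw [map_zero]
      exact hz
    let φ : Fin m × ι → R := fun p => P.C (w p.2) * P.X ^ (p.1 : ℕ)
    have hφcoeff : ∀ p : Fin m × ι, P.coeff (φ p) = Finsupp.single (p.1 : ℕ) (w p.2) :=
      fun p => spx_coeff_C_mul_pow P _ _
    have hφinj : Function.Injective φ := by
      intro p p' hpq
      have h1 := congrArg P.coeff hpq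
      rw [hφcoeff, hφcoeff, Finsupp.single_eq_single_iff] at h1
      rcases h1 with ⟨h1, h2⟩ | ⟨h1, _⟩
      · exact Prod.ext (Fin.ext h1) (hwinj h2)
      · exact absurd h1 (hwne _)
    refine ⟨Finset.image φ Finset.univ, ?_, ?_⟩
    · intro v hv
      simp only [Finset.coe_image, Set.mem_image, Finset.mem_coe] at hv
      obtain ⟨p, _, rfl⟩ := hv
      refine (hmem _).mpr ⟨fun j hj => ?_, fun j => ?_⟩
      · rw [hφcoeff, Finsupp.single_apply, if_neg (by have := p.1.isLt; omega)]
      · rw [hφcoeff, Finsupp.single_apply]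
        split_ifs
        · exact hwint _
        · exact isIntegral_zero
    · intro x hx
      obtain ⟨hxd, hxi⟩ := (hmem x).mp hx
      let xO : Fin m → 𝓞 K := fun i => ⟨P.coeff x (i : ℕ), hxi (i : ℕ)⟩
      let N : Fin m × ι → ℤ := fun p => B.repr (xO p.1) p.2
      refine ⟨fun v => if h : ∃ p, φ p = v then ((N (Classical.choose h) : ℤ) : 𝓞 F) else 0, ?_⟩
      rw [Finset.sum_image (fun p _ p' _ h => hφinj h)]
      have hco : ∀ p : Fin m × ι,
          (if h : ∃ p', φ p' = φ p then ((N (Classical.choose h) : ℤ) : 𝓞 F) else 0)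
            = ((N p : ℤ) : 𝓞 F) := by
        intro p
        rw [dif_pos ⟨p, rfl⟩]
        exact congrArg _ (congrArg N (hφinj (Classical.choose_spec (⟨p, rfl⟩ : ∃ p', φ p' = φ p))))
      simp only [hco]
      have hterm : ∀ p : Fin m × ι,
          P.C (algebraMap F K (algebraMap (𝓞 F) F ((N p : ℤ) : 𝓞 F))) * φ p
            = P.C ((N p : K) * w p.2) * P.X ^ (p.1 : ℕ) := by
        intro p
        have hcast : algebraMap F K (algebraMap (𝓞 F) F ((N p : ℤ) : 𝓞 F)) = ((N p : ℤ) : K) := by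
          rw [map_intCast, map_intCast]
        rw [hcast, show φ p = P.C (w p.2) * P.X ^ (p.1 : ℕ) from rfl, ← mul_assoc, ← map_mul]
      rw [Finset.sum_congr rfl fun p _ => hterm p, Fintype.sum_prod_type]
      have hrepr : ∀ i : Fin m, P.coeff x (i : ℕ) = ∑ j : ι, ((N (i, j) : ℤ) : K) * w j := by
        intro i
        have h1 : xO i = ∑ j : ι, B.repr (xO i) j • B j := (B.sum_repr (xO i)).symm
        have h2 := congrArg (algebraMap (𝓞 K) K) h1
        rw [map_sum] at h2
        calc P.coeff x (i : ℕ) = algebraMap (𝓞 K) K (xO i) := rfl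
          _ = ∑ j : ι, algebraMap (𝓞 K) K (B.repr (xO i) j • B j) := h2
          _ = ∑ j : ι, ((N (i, j) : ℤ) : K) * w j := by
              refine Finset.sum_congr rfl fun j _ => ?_
              rw [zsmul_eq_mul, map_mul, map_intCast]
      have hinner : ∀ i : Fin m,
          ∑ j : ι, P.C (((N (i, j) : ℤ) : K) * w j) * P.X ^ (i : ℕ)
            = P.C (P.coeff x (i : ℕ)) * P.X ^ (i : ℕ) := by
        intro i
        rw [← Finset.sum_mul, ← map_sum, ← hrepr i]
      rw [Finset.sum_congr rfl fun i _ => hinner i]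
      exact spx_repr_dlt P hxd
  · -- F-basis contained in Λ
    obtain ⟨y, hy0, hy⟩ := exists_integral_multiples ℤ ℚ
      (Finset.image (Module.finBasis F K) Finset.univ)
    let n := Module.finrank F K
    let V : Module.Basis (Fin n) F K := Module.finBasis F K
    let u : Fin n → Fˣ := fun _ => Units.mk0 ((y : ℤ) : F) (by exact_mod_cast hy0)
    let W : Module.Basis (Fin n) F K := V.unitsSMul u
    have hW : ∀ j, W j = ((y : ℤ) : F) • V j := fun j => V.unitsSMul_apply j
    have hWint : ∀ j, IsIntegral ℤ (W j) := by
      intro j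
      have h1 : IsIntegral ℤ (y • V j) := hy (V j) (Finset.mem_image_of_mem _ (Finset.mem_univ j))
      have h2 : W j = y • V j := by
        rw [hW j, Algebra.smul_def, zsmul_eq_mul]
        norm_num
      rw [h2]
      exact h1
    have hWne : ∀ j, W j ≠ 0 := fun j => W.ne_zero j
    have hWinj : Function.Injective W := W.injective
    let φ : Fin m × Fin n → R := fun p => P.C (W p.2) * P.X ^ (p.1 : ℕ)
    have hφcoeff : ∀ p : Fin m × Fin n, P.coeff (φ p) = Finsupp.single (p.1 : ℕ) (W p.2) :=
      fun p => spx_coeff_C_mul_pow P _ _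
    have hφinj : Function.Injective φ := by
      intro p p' hpq
      have h1 := congrArg P.coeff hpq
      rw [hφcoeff, hφcoeff, Finsupp.single_eq_single_iff] at h1
      rcases h1 with ⟨h1, h2⟩ | ⟨h1, _⟩
      · exact Prod.ext (Fin.ext h1) (hWinj h2)
      · exact absurd h1 (hWne _)
    refine ⟨Finset.image φ Finset.univ, ?_, ?_, ?_⟩
    · intro v hv
      simp only [Finset.coe_image, Set.mem_image, Finset.mem_coe] at hv
      obtain ⟨p, _, rfl⟩ := hv
      refine (hmem _).mpr ⟨fun j hj => ?_, fun j => ?_⟩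
      · rw [hφcoeff, Finsupp.single_apply, if_neg (by have := p.1.isLt; omega)]
      · rw [hφcoeff, Finsupp.single_apply]
        split_ifs
        · exact hWint _
        · exact isIntegral_zero
    · -- spanning
      intro x hxdeg
      have hxd : P.SPdlt x m := (spx_deg_lt_iff P x m).mp hxdeg
      let c : Fin m × Fin n → F := fun p => W.repr (P.coeff x (p.1 : ℕ)) p.2
      refine ⟨fun v => if h : ∃ p, φ p = v then c (Classical.choose h) else 0, ?_⟩
      rw [Finset.sum_image (fun p _ p' _ h => hφinj h)]
      have hco : ∀ p : Fin m × Fin n,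
          (if h : ∃ p', φ p' = φ p then c (Classical.choose h) else 0) = c p := by
        intro p
        rw [dif_pos ⟨p, rfl⟩]
        exact congrArg c (hφinj (Classical.choose_spec (⟨p, rfl⟩ : ∃ p', φ p' = φ p)))
      simp only [hco]
      have hterm : ∀ p : Fin m × Fin n,
          P.C (algebraMap F K (c p)) * φ p = P.C (c p • W p.2) * P.X ^ (p.1 : ℕ) := by
        intro p
        rw [show φ p = P.C (W p.2) * P.X ^ (p.1 : ℕ) from rfl, ← mul_assoc, ← map_mul,
          Algebra.smul_def]
      rw [Finset.sum_congr rfl fun p _ => hterm p, Fintype.sum_prod_type]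
      have hinner : ∀ i : Fin m,
          ∑ j : Fin n, P.C (c (i, j) • W j) * P.X ^ (i : ℕ)
            = P.C (P.coeff x (i : ℕ)) * P.X ^ (i : ℕ) := by
        intro i
        rw [← Finset.sum_mul, ← map_sum]
        congr 2
        exact W.sum_repr (P.coeff x (i : ℕ))
      rw [Finset.sum_congr rfl fun i _ => hinner i]
      exact spx_repr_dlt P hxd
    · -- linear independence
      intro co hsum v hv
      rw [Finset.sum_image (fun p _ p' _ h => hφinj h)] at hsum
      have hterm : ∀ p : Fin m × Fin n,
          P.C (algebraMap F K (co (φ p))) * φ p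
            = P.C (co (φ p) • W p.2) * P.X ^ (p.1 : ℕ) := by
        intro p
        rw [show φ p = P.C (W p.2) * P.X ^ (p.1 : ℕ) from rfl, ← mul_assoc, ← map_mul,
          Algebra.smul_def]
      rw [Finset.sum_congr rfl fun p _ => hterm p, Fintype.sum_prod_type] at hsum
      have hinner : ∀ i : Fin m,
          ∑ j : Fin n, P.C (co (φ (i, j)) • W j) * P.X ^ (i : ℕ)
            = P.C (∑ j : Fin n, co (φ (i, j)) • W j) * P.X ^ (i : ℕ) := by
        intro i
        rw [← Finset.sum_mul, ← map_sum]
      rw [Finset.sum_congr rfl fun i _ => hinner i] at hsum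
      have hzero : ∀ i : Fin m, (∑ j : Fin n, co (φ (i, j)) • W j) = 0 := by
        intro i
        have h1 : P.coeff (∑ i : Fin m, P.C (∑ j : Fin n, co (φ (i, j)) • W j) * P.X ^ (i : ℕ))
            (i : ℕ) = P.coeff (0 : R) (i : ℕ) := by rw [hsum]
        rw [spx_coeff_sum_vec, dif_pos i.isLt, map_zero] at h1
        exact h1
      obtain ⟨p, _, rfl⟩ := Finset.mem_image.mp hv
      have hli := linearIndependent_iff'.mp W.linearIndependent Finset.univ
        (fun j => co (φ (p.1, j))) (hzero p.1) p.2 (Finset.mem_univ p.2)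
      simpa using hli
  · -- powers of X lie in Λ
    intro i
    refine (hmem _).mpr ⟨fun j hj => ?_, fun j => ?_⟩
    · rw [hXpow, Finsupp.single_apply, if_neg (by have := i.isLt; omega)]
    · rw [hXpow, Finsupp.single_apply]
      split_ifs
      · exact isIntegral_one
      · exact isIntegral_zero
  · -- unique K-coefficients
    intro x hxdeg
    have hxd : P.SPdlt x m := (spx_deg_lt_iff P x m).mp hxdeg
    refine ⟨fun i => P.coeff x (i : ℕ), spx_repr_dlt P hxd, ?_⟩
    intro c hc
    funext i
    have h1 : P.coeff x (i : ℕ)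
        = P.coeff (∑ i : Fin m, P.C (c i) * P.X ^ (i : ℕ)) (i : ℕ) := by rw [← hc]
    rw [spx_coeff_sum_vec, dif_pos i.isLt] at h1
    exact h1.symm
  · -- no zero divisors
    intro x hx y hy hp
    by_cases hx0 : x = 0
    · exact Or.inl hx0
    by_cases hy0 : y = 0
    · exact Or.inr hy0
    exfalso
    obtain ⟨hxd, hxi⟩ := (hmem x).mp hx
    obtain ⟨hyd, hyi⟩ := (hmem y).mp hy
    obtain ⟨q, heq, _, _⟩ := hpmul x y hxd hxi hyd hyi
    rw [hp, add_zero] at heq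
    have hirr' : ∀ g h : R, P.SPdlt g m → P.SPdlt h m → f ≠ g * h := by
      intro g h hg hh hfe
      exact hirr ⟨g, h, (spx_deg_lt_iff P g m).mpr hg, (spx_deg_lt_iff P h m).mpr hh, hfe⟩
    obtain ⟨ey, hey⟩ := spx_exists_deg P hy0
    have hcop := spx_coprime P h0 hfdeg hirr' hy0 hyd
    exact spx_claim P h0 ey y hey f m hfdeg hcop x q hx0 heq hxd
end

section
/- With notation as in the reduction setting: let f̄ ∈ (O_K/𝔭O_K)[t;σ̄,δ̄] be monic of degree m and let S_{f̄} be the associated Petit algebra. If O_K/𝔭O_K is a field and f̄ is irreducible in (O_K/𝔭O_K)[t;σ̄,δ̄], then S_{f̄} is a division algebra. Conversely, if S_{f̄} is a division algebra, then O_K/𝔭O_K is a field and f̄ is irreducible in (O_K/𝔭O_K)[t;σ̄,δ̄]. -/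
/-! ### Auxiliary theory of skew polynomial presentations -/

namespace SkewPolyRing

variable {S : Type*} [Ring S] {σ : S →+* S} {δ : S → S} {R : Type*} [Ring R]
variable (P : SkewPolyRing S σ δ R)

theorem coeff_symm_single (i : ℕ) (a : S) :
    P.coeff.symm (Finsupp.single i a) = P.C a * P.X ^ i := by
  rw [P.coeff_symm_apply]
  exact Finsupp.sum_single_index (by simp)

theorem coeff_C_mul_X_pow (i : ℕ) (a : S) :
    P.coeff (P.C a * P.X ^ i) = Finsupp.single i a := by
  rw [← coeff_symm_single P i a, AddEquiv.apply_symm_apply]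

theorem coeff_C (a : S) : P.coeff (P.C a) = Finsupp.single 0 a := by
  simpa using P.coeff_C_mul_X_pow 0 a

theorem coeff_one : P.coeff 1 = Finsupp.single 0 (1 : S) := by
  simpa using P.coeff_C_mul_X_pow 0 1

theorem eq_sum (x : R) :
    x = ∑ i ∈ (P.coeff x).support, P.C (P.coeff x i) * P.X ^ i := by
  conv_lhs => rw [← P.coeff.symm_apply_apply x]
  rw [P.coeff_symm_apply]
  rfl

theorem coeff_C_mul (a : S) (x : R) (n : ℕ) :
    P.coeff (P.C a * x) n = a * P.coeff x n := by
  conv_lhs => rw [eq_sum P x]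
  rw [Finset.mul_sum]
  have hterm : ∀ i ∈ (P.coeff x).support,
      P.C a * (P.C (P.coeff x i) * P.X ^ i) = P.C (a * P.coeff x i) * P.X ^ i := by
    intro i _
    rw [← mul_assoc, ← map_mul]
  rw [Finset.sum_congr rfl hterm, map_sum, Finsupp.finset_sum_apply]
  simp only [coeff_C_mul_X_pow, Finsupp.single_apply]
  rw [Finset.sum_ite_eq' (P.coeff x).support n (fun i => a * P.coeff x i)]
  by_cases h : n ∈ (P.coeff x).support
  · rw [if_pos h]
  · rw [if_neg h, Finsupp.notMem_support_iff.mp h, mul_zero]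

theorem delta_zero (hδ : IsLeftSigmaDerivation σ δ) : δ (0 : S) = 0 := by
  have h := hδ.1 0 0
  rw [add_zero] at h
  exact (left_eq_add.mp h)

theorem coeff_X_mul_apply (hδ : IsLeftSigmaDerivation σ δ) (x : R) (n : ℕ) :
    P.coeff (P.X * x) n = ∑ i ∈ (P.coeff x).support,
      ((if i + 1 = n then σ (P.coeff x i) else 0) + (if i = n then δ (P.coeff x i) else 0)) := by
  have hterm : ∀ (c : S) (i : ℕ), P.coeff (P.X * (P.C c * P.X ^ i))
      = Finsupp.single (i + 1) (σ c) + Finsupp.single i (δ c) := by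
    intro c i
    rw [← mul_assoc, P.X_mul, add_mul, mul_assoc, ← pow_succ', map_add,
      coeff_C_mul_X_pow, coeff_C_mul_X_pow]
  conv_lhs => rw [eq_sum P x]
  rw [Finset.mul_sum, map_sum, Finsupp.finset_sum_apply]
  refine Finset.sum_congr rfl fun i _ => ?_
  rw [hterm, Finsupp.add_apply, Finsupp.single_apply, Finsupp.single_apply]

theorem coeff_X_mul_succ (hδ : IsLeftSigmaDerivation σ δ) (x : R) (k : ℕ) :
    P.coeff (P.X * x) (k + 1) = σ (P.coeff x k) + δ (P.coeff x (k + 1)) := by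
  rw [coeff_X_mul_apply P hδ x (k + 1), Finset.sum_add_distrib]
  congr 1
  · simp only [add_left_inj]
    rw [Finset.sum_ite_eq' (P.coeff x).support k (fun i => σ (P.coeff x i))]
    by_cases h : k ∈ (P.coeff x).support
    · rw [if_pos h]
    · rw [if_neg h, Finsupp.notMem_support_iff.mp h, map_zero]
  · rw [Finset.sum_ite_eq' (P.coeff x).support (k + 1) (fun i => δ (P.coeff x i))]
    by_cases h : k + 1 ∈ (P.coeff x).support
    · rw [if_pos h]
    · rw [if_neg h, Finsupp.notMem_support_iff.mp h, delta_zero hδ]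

/-- `x` has all coefficients beyond `n` equal to zero. -/
def BddBy (P : SkewPolyRing S σ δ R) (x : R) (n : ℕ) : Prop :=
  ∀ k, n < k → P.coeff x k = 0

theorem X_pow_mul_bdd (hδ : IsLeftSigmaDerivation σ δ) (i : ℕ) (x : R) (n : ℕ)
    (hx : P.BddBy x n) :
    P.BddBy (P.X ^ i * x) (n + i) ∧ P.coeff (P.X ^ i * x) (n + i) = σ^[i] (P.coeff x n) := by
  induction i with
  | zero =>
    simp only [pow_zero, one_mul, Nat.add_zero, Function.iterate_zero, id_eq]
    exact ⟨hx, trivial⟩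
  | succ j ih =>
    have h1 : P.X ^ (j + 1) * x = P.X * (P.X ^ j * x) := by rw [pow_succ', mul_assoc]
    constructor
    · intro k hk
      obtain ⟨t, rfl⟩ : ∃ t, k = t + 1 := ⟨k - 1, by omega⟩
      rw [h1, coeff_X_mul_succ P hδ, ih.1 t (by omega), ih.1 (t + 1) (by omega), map_zero,
        delta_zero hδ, add_zero]
    · have h2 : n + (j + 1) = (n + j) + 1 := by omega
      rw [h1, h2, coeff_X_mul_succ P hδ, ih.2, ih.1 (n + j + 1) (by omega), delta_zero hδ,
        add_zero, Function.iterate_succ_apply']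

theorem mul_bdd (hδ : IsLeftSigmaDerivation σ δ) {x y : R} {d n : ℕ}
    (hx : P.BddBy x d) (hy : P.BddBy y n) :
    P.BddBy (x * y) (d + n) ∧
      P.coeff (x * y) (d + n) = P.coeff x d * σ^[d] (P.coeff y n) := by
  have hxy : x * y = ∑ i ∈ (P.coeff x).support, P.C (P.coeff x i) * (P.X ^ i * y) := by
    conv_lhs => rw [eq_sum P x]
    rw [Finset.sum_mul]
    exact Finset.sum_congr rfl fun i _ => mul_assoc _ _ _
  have hca : ∀ k : ℕ, P.coeff (x * y) k
      = ∑ i ∈ (P.coeff x).support, P.coeff x i * P.coeff (P.X ^ i * y) k := by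
    intro k
    rw [hxy, map_sum, Finsupp.finset_sum_apply]
    exact Finset.sum_congr rfl fun i _ => coeff_C_mul P _ _ k
  have hsup : ∀ i ∈ (P.coeff x).support, i ≤ d := by
    intro i hi
    by_contra h
    exact (Finsupp.mem_support_iff.mp hi) (hx i (by omega))
  constructor
  · intro k hk
    rw [hca k]
    refine Finset.sum_eq_zero fun i hi => ?_
    rw [(X_pow_mul_bdd P hδ i y n hy).1 k (by have := hsup i hi; omega), mul_zero]
  · rw [hca (d + n)]
    rw [Finset.sum_eq_single d (fun i hi hne => ?_) (fun hd => ?_)]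
    · have h2 := (X_pow_mul_bdd P hδ d y n hy).2
      rw [Nat.add_comm d n, h2]
    · have hile : i ≤ d := hsup i hi
      rw [(X_pow_mul_bdd P hδ i y n hy).1 (d + n) (by omega), mul_zero]
    · rw [Finsupp.notMem_support_iff.mp hd, zero_mul]

theorem bot_lt_coe' (n : ℕ) : (⊥ : WithBot ℕ) < (n : WithBot ℕ) :=
  WithBot.bot_lt_coe n

theorem coe_lt_coe' {a b : ℕ} : (a : WithBot ℕ) < (b : WithBot ℕ) ↔ a < b := by
  rw [show ((a : WithBot ℕ)) = WithBot.some a from rfl,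
    show ((b : WithBot ℕ)) = WithBot.some b from rfl, WithBot.coe_lt_coe]

theorem coe_le_coe' {a b : ℕ} : (a : WithBot ℕ) ≤ (b : WithBot ℕ) ↔ a ≤ b := by
  rw [show ((a : WithBot ℕ)) = WithBot.some a from rfl,
    show ((b : WithBot ℕ)) = WithBot.some b from rfl, WithBot.coe_le_coe]

theorem coe_inj' {a b : ℕ} : (a : WithBot ℕ) = (b : WithBot ℕ) ↔ a = b := by
  rw [show ((a : WithBot ℕ)) = WithBot.some a from rfl,
    show ((b : WithBot ℕ)) = WithBot.some b from rfl]
  exact WithBot.coe_inj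

theorem deg_lt_coe_iff {x : R} {n : ℕ} :
    P.deg x < (n : WithBot ℕ) ↔ ∀ k, n ≤ k → P.coeff x k = 0 := by
  constructor
  · intro h k hk
    by_contra hc
    have hb := Finset.le_max (Finsupp.mem_support_iff.mpr hc)
    have h2 : (k : WithBot ℕ) < (n : WithBot ℕ) := lt_of_le_of_lt hb h
    have : k < n := coe_lt_coe'.mp h2
    omega
  · intro h
    rcases hmax : (P.coeff x).support.max with _ | b
    · rw [deg, hmax]
      exact WithBot.bot_lt_coe n
    · have hb := Finset.mem_of_max hmax
      have hbn : b < n := by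
        by_contra hc
        push_neg at hc
        exact Finsupp.mem_support_iff.mp hb (h b hc)
      rw [deg, hmax]
      exact coe_lt_coe'.mpr hbn

theorem deg_eq_coe_iff {x : R} {n : ℕ} :
    P.deg x = (n : WithBot ℕ) ↔ P.coeff x n ≠ 0 ∧ P.BddBy x n := by
  constructor
  · intro h
    have h' : (P.coeff x).support.max = ((n : ℕ) : WithBot ℕ) := h
    have hmem : n ∈ (P.coeff x).support := Finset.mem_of_max h'
    refine ⟨Finsupp.mem_support_iff.mp hmem, fun k hk => ?_⟩
    by_contra hc
    have h2 := Finset.le_max (Finsupp.mem_support_iff.mpr hc)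
    have h3 : (k : WithBot ℕ) ≤ (n : WithBot ℕ) := h2.trans (le_of_eq h')
    have : k ≤ n := coe_le_coe'.mp h3
    omega
  · rintro ⟨h1, h2⟩
    refine le_antisymm (Finset.max_le fun b hb => ?_) ?_
    · refine coe_le_coe'.mpr ?_
      by_contra hc
      push_neg at hc
      exact Finsupp.mem_support_iff.mp hb (h2 b hc)
    · exact Finset.le_max (Finsupp.mem_support_iff.mpr h1)

theorem deg_zero : P.deg (0 : R) = ⊥ := by
  rw [deg, map_zero]
  simp

theorem deg_eq_bot_iff {x : R} : P.deg x = ⊥ ↔ x = 0 := by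
  rw [deg, Finset.max_eq_bot, Finsupp.support_eq_empty]
  constructor
  · intro h
    apply P.coeff.injective
    rw [h, map_zero]
  · rintro rfl
    rw [map_zero]

theorem exists_deg {x : R} (hx : x ≠ 0) : ∃ n : ℕ, P.deg x = (n : WithBot ℕ) := by
  cases h : P.deg x with
  | bot => exact absurd ((deg_eq_bot_iff P).mp h) hx
  | coe n => exact ⟨n, rfl⟩

theorem deg_sub_lt {x y : R} {n : ℕ} (hx : P.deg x < (n : WithBot ℕ))
    (hy : P.deg y < (n : WithBot ℕ)) : P.deg (x - y) < (n : WithBot ℕ) := by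
  rw [deg_lt_coe_iff] at hx hy ⊢
  intro k hk
  rw [map_sub, Finsupp.sub_apply, hx k hk, hy k hk, sub_zero]

theorem div_by (hδ : IsLeftSigmaDerivation σ δ) {d : R} {k : ℕ} (hdb : P.BddBy d k)
    (hsolve : ∀ (j : ℕ) (c : S), ∃ u : S, u * σ^[j] (P.coeff d k) = c) (g : R) :
    ∃ q r : R, g = q * d + r ∧ P.deg r < (k : WithBot ℕ) := by
  have main : ∀ N : ℕ, ∀ g : R, P.deg g < (N : WithBot ℕ) →
      ∃ q r : R, g = q * d + r ∧ P.deg r < (k : WithBot ℕ) := by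
    intro N
    induction N using Nat.strong_induction_on with
    | _ N ih =>
      intro g hg
      by_cases hgk : P.deg g < (k : WithBot ℕ)
      · exact ⟨0, g, by rw [zero_mul, zero_add], hgk⟩
      rcases eq_or_ne g 0 with rfl | hg0
      · exact absurd (by rw [deg_zero]; exact bot_lt_coe' k) hgk
      obtain ⟨n, hn⟩ := exists_deg P hg0
      have hkn : k ≤ n := by
        by_contra hc
        exact hgk (by rw [hn]; exact coe_lt_coe'.mpr (by omega))
      have hnN : n < N := by
        rw [hn] at hg
        exact coe_lt_coe'.mp hg
      obtain ⟨u, hu⟩ := hsolve (n - k) (P.coeff g n)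
      set c : R := P.C u * P.X ^ (n - k) * d with hc
      have hbu : P.BddBy (P.C u * P.X ^ (n - k)) (n - k) := by
        intro j hj
        rw [coeff_C_mul_X_pow, Finsupp.single_apply, if_neg (by omega)]
      have h1 := mul_bdd P hδ hbu hdb
      have hnk : n - k + k = n := by omega
      rw [hnk] at h1
      have hctop : P.coeff c n = P.coeff g n := by
        rw [hc, h1.2, coeff_C_mul_X_pow, Finsupp.single_apply, if_pos rfl, hu]
      obtain ⟨hgc, hbg⟩ := (deg_eq_coe_iff P).mp hn
      have hg' : P.deg (g - c) < (n : WithBot ℕ) := by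
        rw [deg_lt_coe_iff]
        intro j hj
        rw [map_sub, Finsupp.sub_apply]
        rcases eq_or_lt_of_le hj with rfl | hlt
        · rw [hctop, sub_self]
        · rw [hbg j hlt, h1.1 j hlt, sub_zero]
      obtain ⟨q', r, hqr, hr⟩ := ih n hnN (g - c) hg'
      refine ⟨q' + P.C u * P.X ^ (n - k), r, ?_, hr⟩
      have h2 : g = (g - c) + c := (sub_add_cancel g c).symm
      rw [h2, hqr, hc, add_mul]
      abel
  rcases eq_or_ne g 0 with rfl | hg0
  · exact ⟨0, 0, by rw [zero_mul, zero_add], by rw [deg_zero]; exact bot_lt_coe' k⟩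
  obtain ⟨n, hn⟩ := exists_deg P hg0
  exact main (n + 1) g (by rw [hn]; exact coe_lt_coe'.mpr (by omega))

theorem div_unique (hδ : IsLeftSigmaDerivation σ δ) {d : R} {k : ℕ} (hdb : P.BddBy d k)
    (hreg : ∀ (j : ℕ) (c : S), c ≠ 0 → c * σ^[j] (P.coeff d k) ≠ 0)
    {q₁ r₁ q₂ r₂ : R} (h : q₁ * d + r₁ = q₂ * d + r₂)
    (h₁ : P.deg r₁ < (k : WithBot ℕ)) (h₂ : P.deg r₂ < (k : WithBot ℕ)) : r₁ = r₂ := by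
  by_contra hne
  have hq : (q₁ - q₂) * d = r₂ - r₁ := by
    rw [sub_mul, sub_eq_sub_iff_add_eq_add]
    exact h.trans (add_comm _ _)
  have hq0 : q₁ - q₂ ≠ 0 := by
    rintro h0
    rw [h0, zero_mul] at hq
    exact hne (sub_eq_zero.mp hq.symm).symm
  obtain ⟨n, hn⟩ := exists_deg P hq0
  obtain ⟨hcq, hbq⟩ := (deg_eq_coe_iff P).mp hn
  have h3 := (mul_bdd P hδ hbq hdb).2
  rw [hq] at h3
  have h4 : P.coeff (r₂ - r₁) (n + k) = 0 := by
    rw [map_sub, Finsupp.sub_apply, (deg_lt_coe_iff P).mp h₂ _ (by omega),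
      (deg_lt_coe_iff P).mp h₁ _ (by omega), sub_zero]
  rw [h4] at h3
  exact hreg n _ hcq h3.symm

theorem Monic.bddBy {f : R} {m : ℕ} (hf : P.Monic f m) : P.BddBy f m :=
  ((deg_eq_coe_iff P).mp hf.1).2

theorem monic_solve {f : R} {m : ℕ} (hf : P.Monic f m) (j : ℕ) (c : S) :
    ∃ u : S, u * σ^[j] (P.coeff f m) = c :=
  ⟨c, by rw [hf.2, Function.iterate_fixed (map_one σ) j, mul_one]⟩

theorem monic_reg {f : R} {m : ℕ} (hf : P.Monic f m) (j : ℕ) (c : S) (hc : c ≠ 0) :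
    c * σ^[j] (P.coeff f m) ≠ 0 := by
  rw [hf.2, Function.iterate_fixed (map_one σ) j, mul_one]
  exact hc

theorem modr_eq (hδ : IsLeftSigmaDerivation σ δ) {f : R} {m : ℕ} (hf : P.Monic f m)
    {g q r : R} (hgr : g = q * f + r) (hr : P.deg r < (m : WithBot ℕ)) :
    P.modr f g = r := by
  have hex : ∃ qr : R × R, g = qr.1 * f + qr.2 ∧ P.deg qr.2 < P.deg f :=
    ⟨(q, r), hgr, by rw [hf.1]; exact hr⟩
  rw [modr, dif_pos hex]
  obtain ⟨hs1, hs2⟩ := Classical.choose_spec hex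
  exact div_unique P hδ (Monic.bddBy P hf) (monic_reg P hf) (hs1.symm.trans hgr)
    (hs2.trans_eq hf.1) hr

theorem modr_spec (hδ : IsLeftSigmaDerivation σ δ) {f : R} {m : ℕ} (hf : P.Monic f m) (g : R) :
    ∃ q : R, g = q * f + P.modr f g ∧ P.deg (P.modr f g) < (m : WithBot ℕ) := by
  obtain ⟨q, r, hqr, hr⟩ := div_by P hδ (Monic.bddBy P hf) (monic_solve P hf) g
  rw [modr_eq P hδ hf hqr hr]
  exact ⟨q, hqr, hr⟩

theorem modr_deg_lt (hδ : IsLeftSigmaDerivation σ δ) {f : R} {m : ℕ} (hf : P.Monic f m)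
    (g : R) : P.deg (P.modr f g) < (m : WithBot ℕ) := by
  obtain ⟨q, -, h⟩ := modr_spec P hδ hf g
  exact h

theorem modr_zero (hδ : IsLeftSigmaDerivation σ δ) {f : R} {m : ℕ} (hf : P.Monic f m) :
    P.modr f 0 = 0 :=
  modr_eq P hδ hf (by rw [zero_mul, zero_add]) (by rw [deg_zero]; exact bot_lt_coe' m)

theorem modr_self (hδ : IsLeftSigmaDerivation σ δ) {f : R} {m : ℕ} (hf : P.Monic f m) :
    P.modr f f = 0 :=
  modr_eq P hδ hf (by rw [one_mul, add_zero]) (by rw [deg_zero]; exact bot_lt_coe' m)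

theorem coeff_ofVec {n : ℕ} (c : Fin n → S) (j : ℕ) :
    P.coeff (P.ofVec c) j = if h : j < n then c ⟨j, h⟩ else 0 := by
  rw [ofVec, map_sum, Finsupp.finset_sum_apply]
  simp only [coeff_C_mul_X_pow, Finsupp.single_apply]
  by_cases h : j < n
  · rw [dif_pos h, Finset.sum_eq_single (⟨j, h⟩ : Fin n)]
    · rw [if_pos rfl]
    · intro b _ hbne
      exact if_neg fun he => hbne (Fin.ext he)
    · intro habs
      exact absurd (Finset.mem_univ _) habs
  · rw [dif_neg h]
    exact Finset.sum_eq_zero fun i _ => if_neg fun he => h (lt_of_eq_of_lt he.symm i.isLt)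

/-- The set of skew polynomials of degree `< n` is in bijection with `S^n`. -/
noncomputable def degLtEquiv (n : ℕ) :
    {x : R // P.deg x < (n : WithBot ℕ)} ≃ (Fin n → S) where
  toFun x i := P.coeff x.1 i
  invFun c := ⟨P.ofVec c, by
    rw [deg_lt_coe_iff]
    intro k hk
    rw [coeff_ofVec, dif_neg (by omega)]⟩
  left_inv x := by
    apply Subtype.ext
    apply P.coeff.injective
    ext j
    show P.coeff (P.ofVec fun i => P.coeff x.1 i) j = P.coeff x.1 j
    rw [coeff_ofVec]
    by_cases h : j < n
    · rw [dif_pos h]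
    · rw [dif_neg h, (deg_lt_coe_iff P).mp x.2 j (by omega)]
  right_inv c := by
    funext i
    show P.coeff (P.ofVec c) (i : ℕ) = c i
    rw [coeff_ofVec, dif_pos i.isLt]

theorem finite_degLt [Finite S] (n : ℕ) : Finite {x : R // P.deg x < (n : WithBot ℕ)} :=
  Finite.of_equiv _ (P.degLtEquiv n).symm

theorem card_degLt [Finite S] (n : ℕ) :
    Nat.card {x : R // P.deg x < (n : WithBot ℕ)} = Nat.card S ^ n := by
  rw [Nat.card_congr (P.degLtEquiv n), Nat.card_fun]
  simp

theorem iterate_ne_zero (hσ : Function.Injective σ) (j : ℕ) {c : S} (hc : c ≠ 0) :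
    σ^[j] c ≠ 0 := by
  intro h0
  exact hc ((Function.Injective.iterate hσ j)
    (h0.trans (Function.iterate_fixed (map_zero σ) j).symm))

/-- The key lemma: over a finite "field-like" coefficient ring with injective `σ`, an
irreducible monic `f` admits no relation `a * b = w * f` with `a, b` nonzero of degree
less than `m`. -/
theorem key (hδ : IsLeftSigmaDerivation σ δ) [Finite S] [Nontrivial S]
    (hnz : ∀ a b : S, a ≠ 0 → b ≠ 0 → a * b ≠ 0)
    (hinv : ∀ a : S, a ≠ 0 → ∃ b : S, b * a = 1)
    (hσ : Function.Injective σ)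
    {f : R} {m : ℕ} (hf : P.Monic f m)
    (hirr : ¬ ∃ g h : R, P.deg g < (m : WithBot ℕ) ∧ P.deg h < (m : WithBot ℕ) ∧ f = g * h)
    {a b w : R} (ha : a ≠ 0) (hb : b ≠ 0)
    (hda : P.deg a < (m : WithBot ℕ)) (hdb : P.deg b < (m : WithBot ℕ))
    (hab : a * b = w * f) : False := by
  classical
  have hsolve : ∀ (x : R) (nx : ℕ), P.deg x = (nx : WithBot ℕ) →
      ∀ (j : ℕ) (c : S), ∃ u : S, u * σ^[j] (P.coeff x nx) = c := by
    intro x nx hnx j c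
    have hcx : P.coeff x nx ≠ 0 := ((deg_eq_coe_iff P).mp hnx).1
    obtain ⟨v, hv⟩ := hinv _ (iterate_ne_zero (σ := σ) hσ j hcx)
    exact ⟨c * v, by rw [mul_assoc, hv, mul_one]⟩
  have hf0 : f ≠ 0 := by
    intro h
    have h2 := hf.1
    rw [h, deg_zero] at h2
    exact WithBot.bot_ne_coe h2
  set T : Set R := {h | ∃ p q : R, h = p * b + q * f} with hT
  have hfT : f ∈ T := ⟨0, 1, by rw [zero_mul, one_mul, zero_add]⟩
  have hbT : b ∈ T := ⟨1, 0, by rw [one_mul, zero_mul, add_zero]⟩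
  have hDex : ∃ n : ℕ, ∃ h ∈ T, h ≠ 0 ∧ P.deg h = (n : WithBot ℕ) := ⟨m, f, hfT, hf0, hf.1⟩
  obtain ⟨d, hdT, hd0, hdeg⟩ := Nat.find_spec hDex
  set n₀ := Nat.find hDex with hn₀def
  obtain ⟨hcd, hbd⟩ := (deg_eq_coe_iff P).mp hdeg
  have hdvd : ∀ h ∈ T, ∃ q : R, h = q * d := by
    intro h hh
    obtain ⟨q, r, hqr, hrlt⟩ := div_by P hδ hbd (hsolve d n₀ hdeg) h
    rcases eq_or_ne r 0 with rfl | hr0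
    · exact ⟨q, by rw [hqr, add_zero]⟩
    exfalso
    obtain ⟨nr, hnr⟩ := exists_deg P hr0
    have hrT : r ∈ T := by
      obtain ⟨p1, q1, h1⟩ := hh
      obtain ⟨p2, q2, h2⟩ := hdT
      refine ⟨p1 - q * p2, q1 - q * q2, ?_⟩
      have h3 : r = h - q * d := by rw [hqr]; abel
      rw [h3, h1, h2]
      noncomm_ring
    have hlt : nr < n₀ := by
      rw [hnr] at hrlt
      exact coe_lt_coe'.mp hrlt
    exact Nat.find_min hDex hlt ⟨r, hrT, hr0, hnr⟩
  obtain ⟨e, he⟩ := hdvd f hfT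
  obtain ⟨b', hb'⟩ := hdvd b hbT
  have he0 : e ≠ 0 := by rintro rfl; rw [zero_mul] at he; exact hf0 he
  have hb'0 : b' ≠ 0 := by rintro rfl; rw [zero_mul] at hb'; exact hb hb'
  obtain ⟨ne, hne⟩ := exists_deg P he0
  obtain ⟨nb, hnb⟩ := exists_deg P hb'0
  have hmul : ∀ (x : R) (nx : ℕ), P.deg x = (nx : WithBot ℕ) →
      P.deg (x * d) = ((nx + n₀ : ℕ) : WithBot ℕ) := by
    intro x nx hnx
    obtain ⟨hcx, hbx⟩ := (deg_eq_coe_iff P).mp hnx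
    have h1 := mul_bdd P hδ hbx hbd
    refine (deg_eq_coe_iff P).mpr ⟨?_, h1.1⟩
    rw [h1.2]
    exact hnz _ _ hcx (iterate_ne_zero (σ := σ) hσ nx hcd)
  have hm_eq : m = ne + n₀ := by
    have h1 := hmul e ne hne
    rw [← he, hf.1] at h1
    exact coe_inj'.mp h1
  have hdbn : nb + n₀ < m := by
    have h1 := hmul b' nb hnb
    rw [← hb'] at h1
    rw [h1] at hdb
    exact coe_lt_coe'.mp hdb
  have hn₀0 : n₀ = 0 := by
    by_contra h0
    have hdm : P.deg d < (m : WithBot ℕ) := by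
      rw [hdeg]; exact coe_lt_coe'.mpr (by omega)
    have hem : P.deg e < (m : WithBot ℕ) := by
      rw [hne]; exact coe_lt_coe'.mpr (by omega)
    exact hirr ⟨e, d, hem, hdm, he⟩
  rw [hn₀0] at hcd hbd
  obtain ⟨ci, hci⟩ := hinv _ hcd
  have hone : P.C ci * d = 1 := by
    apply P.coeff.injective
    ext j
    rw [coeff_C_mul P, coeff_one P, Finsupp.single_apply]
    rcases Nat.eq_zero_or_pos j with rfl | hj
    · rw [if_pos rfl, hci]
    · rw [if_neg (by omega), hbd j hj, mul_zero]
  obtain ⟨p2, q2, h2⟩ := hdT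
  have honeT : (1 : R) = (P.C ci * p2) * b + (P.C ci * q2) * f := by
    rw [← hone, h2]
    noncomm_ring
  set p₀ := P.C ci * p2 with hp₀
  set q₀ := P.C ci * q2 with hq₀
  obtain ⟨na, hna⟩ := exists_deg P ha
  have hna_lt : na < m := by rw [hna] at hda; exact coe_lt_coe'.mp hda
  obtain ⟨hca, hba⟩ := (deg_eq_coe_iff P).mp hna
  have hsurj : Function.Surjective (fun r : {x : R // P.deg x < (na : WithBot ℕ)} =>
      (⟨P.modr f (r.1 * b), modr_deg_lt P hδ hf (r.1 * b)⟩ :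
        {x : R // P.deg x < (m : WithBot ℕ)})) := by
    intro s
    obtain ⟨q₂', r, hqr, hrlt⟩ := div_by P hδ hba (hsolve a na hna) (s.1 * p₀)
    refine ⟨⟨r, hrlt⟩, Subtype.ext ?_⟩
    have hrb : r * b = (-(s.1 * q₀) - q₂' * w) * f + s.1 := by
      have h3 : r = s.1 * p₀ - q₂' * a := by rw [hqr]; abel
      have h4 : p₀ * b = 1 - q₀ * f := eq_sub_of_add_eq honeT.symm
      rw [h3, sub_mul, mul_assoc q₂' a b, hab, mul_assoc s.1 p₀ b, h4]
      noncomm_ring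
    exact modr_eq P hδ hf hrb s.2
  haveI := finite_degLt P (S := S) na
  have hcard := Nat.card_le_card_of_surjective _ hsurj
  rw [card_degLt, card_degLt] at hcard
  have h1S : 1 < Nat.card S := by
    rcases Finite.exists_equiv_fin S with ⟨nS, ⟨eS⟩⟩
    haveI : Fintype S := Fintype.ofEquiv _ eS.symm
    rw [Nat.card_eq_fintype_card]
    exact Fintype.one_lt_card_iff_nontrivial.mpr ‹_›
  have := (Nat.pow_le_pow_iff_right h1S).mp hcard
  omega

end SkewPolyRing

open scoped NumberField

set_option synthInstance.maxHeartbeats 800000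
set_option maxHeartbeats 1600000

/-- division criterion for the reduced Petit algebra `S_f̄`.
If `O_K/𝔭O_K` is a field and `f̄` is irreducible then `S_f̄` is a division algebra;
conversely, if `S_f̄` is a division algebra then `O_K/𝔭O_K` is a field and `f̄` is
irreducible. Here "division algebra" means: every nonzero element of
`S_f̄ = {x | deg x < m}` has bijective left and right multiplication maps. -/
theorem reduced_petit_division_iff
    (F K : Type*) [Field F] [Field K] [NumberField F] [NumberField K]
    [Algebra F K] [IsGalois F K]
    (𝔭 : Ideal (𝓞 F)) [𝔭.IsPrime] (h𝔭 : 𝔭 ≠ ⊥)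
    (pK : Ideal (𝓞 K)) (hpK : pK = Ideal.map (algebraMap (𝓞 F) (𝓞 K)) 𝔭)
    (σb : (𝓞 K ⧸ pK) →+* (𝓞 K ⧸ pK)) (hσb : Function.Injective σb)
    (δb : (𝓞 K ⧸ pK) → (𝓞 K ⧸ pK)) (hδb : IsLeftSigmaDerivation σb δb)
    {R' : Type*} [Ring R'] (Q : SkewPolyRing (𝓞 K ⧸ pK) σb δb R')
    (fb : R') (m : ℕ) (hm : 1 ≤ m) (hf : Q.Monic fb m)
    (Sf : Set R') (hSf : Sf = {x : R' | Q.deg x < (m : WithBot ℕ)}) :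
    ((IsField (𝓞 K ⧸ pK) ∧ ¬ IsUnit fb ∧
        ¬ ∃ g h : R', Q.deg g < (m : WithBot ℕ) ∧ Q.deg h < (m : WithBot ℕ) ∧ fb = g * h) →
      (∀ x ∈ Sf, x ≠ 0 →
        Set.BijOn (fun y => Q.pmul fb x y) Sf Sf ∧
        Set.BijOn (fun y => Q.pmul fb y x) Sf Sf)) ∧
    ((∀ x ∈ Sf, x ≠ 0 →
        Set.BijOn (fun y => Q.pmul fb x y) Sf Sf ∧
        Set.BijOn (fun y => Q.pmul fb y x) Sf Sf) →
      (IsField (𝓞 K ⧸ pK) ∧ ¬ IsUnit fb ∧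
        ¬ ∃ g h : R', Q.deg g < (m : WithBot ℕ) ∧ Q.deg h < (m : WithBot ℕ) ∧ fb = g * h)) := by
  classical
  subst hSf
  -- basic facts about the coefficient ring
  have hinj : Function.Injective (algebraMap (𝓞 F) (𝓞 K)) := by
    intro x y hxy
    have h1 : algebraMap (𝓞 K) K ((algebraMap (𝓞 F) (𝓞 K)) x)
        = algebraMap (𝓞 K) K ((algebraMap (𝓞 F) (𝓞 K)) y) := congrArg _ hxy
    rw [← IsScalarTower.algebraMap_apply, ← IsScalarTower.algebraMap_apply] at h1
    rw [IsScalarTower.algebraMap_apply (𝓞 F) F K, IsScalarTower.algebraMap_apply (𝓞 F) F K] at h1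
    have h2 := (algebraMap F K).injective h1
    exact IsIntegralClosure.algebraMap_injective (𝓞 F) ℤ F
      (by rwa [IsScalarTower.algebraMap_apply (𝓞 F) F F, IsScalarTower.algebraMap_apply (𝓞 F) F F]
        at h2 ⊢)
  have hpKbot : pK ≠ ⊥ := by
    rw [hpK]
    intro hbot
    obtain ⟨x, hx, hx0⟩ := Submodule.exists_mem_ne_zero_of_ne_bot h𝔭
    have : algebraMap (𝓞 F) (𝓞 K) x ∈ Ideal.map (algebraMap (𝓞 F) (𝓞 K)) 𝔭 :=
      Ideal.mem_map_of_mem _ hx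
    rw [hbot] at this
    exact hx0 (hinj (by simpa using this))
  have hpKtop : pK ≠ ⊤ := by
    obtain ⟨Qp, -, hQprime, hQcomap⟩ :=
      Ideal.exists_ideal_over_prime_of_isIntegral 𝔭 (⊥ : Ideal (𝓞 K))
        (by
          intro x hx
          have : algebraMap (𝓞 F) (𝓞 K) x = 0 := by simpa using hx
          have hx0 : x = 0 := hinj (by simpa using this)
          simp [hx0])
    intro htop
    apply hQprime.ne_top
    rw [eq_top_iff, ← htop, hpK]
    exact Ideal.map_le_iff_le_comap.mpr (le_of_eq hQcomap.symm)
  haveI hfin : Finite (𝓞 K ⧸ pK) := by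
    exact Ideal.finiteQuotientOfFreeOfNeBot pK hpKbot
  haveI hnt : Nontrivial (𝓞 K ⧸ pK) := Ideal.Quotient.nontrivial_iff.mpr hpKtop
  haveI hntR : Nontrivial R' := Q.coeff.toEquiv.nontrivial
  have hmem0 : (0 : R') ∈ {x : R' | Q.deg x < (m : WithBot ℕ)} := by
    rw [Set.mem_setOf_eq, SkewPolyRing.deg_zero]
    exact SkewPolyRing.bot_lt_coe' m
  have hCmem : ∀ a : 𝓞 K ⧸ pK, Q.C a ∈ {x : R' | Q.deg x < (m : WithBot ℕ)} := by
    intro a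
    rw [Set.mem_setOf_eq, SkewPolyRing.deg_lt_coe_iff]
    intro k hk
    rw [SkewPolyRing.coeff_C, Finsupp.single_apply, if_neg (by omega)]
  have hCinj : Function.Injective Q.C := by
    intro a b hab
    have h1 := congrArg Q.coeff hab
    rw [SkewPolyRing.coeff_C, SkewPolyRing.coeff_C] at h1
    have := congrArg (fun p : ℕ →₀ _ => p 0) h1
    simpa using this
  constructor
  · -- field + irreducible → division algebra
    rintro ⟨hfield, -, hirr⟩ x hx hx0
    have hnz : ∀ a b : 𝓞 K ⧸ pK, a ≠ 0 → b ≠ 0 → a * b ≠ 0 := by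
      intro a b ha hb hab
      obtain ⟨ai, hai⟩ := hfield.mul_inv_cancel ha
      apply hb
      calc b = (ai * a) * b := by rw [mul_comm ai a, hai, one_mul]
        _ = ai * (a * b) := by rw [mul_assoc]
        _ = 0 := by rw [hab, mul_zero]
    have hinvS : ∀ a : 𝓞 K ⧸ pK, a ≠ 0 → ∃ c, c * a = 1 := by
      intro a ha
      obtain ⟨c, hc⟩ := hfield.mul_inv_cancel ha
      exact ⟨c, by rw [mul_comm]; exact hc⟩
    have hKEY : ∀ a b w : R', a ≠ 0 → b ≠ 0 → Q.deg a < (m : WithBot ℕ) →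
        Q.deg b < (m : WithBot ℕ) → a * b = w * fb → False :=
      fun a b w ha hb hda hdb hab =>
        SkewPolyRing.key Q hδb hnz hinvS hσb hf hirr ha hb hda hdb hab
    have hfinset : ({x : R' | Q.deg x < (m : WithBot ℕ)} : Set R').Finite := by
      haveI : Finite ↑{x : R' | Q.deg x < (m : WithBot ℕ)} :=
        SkewPolyRing.finite_degLt Q m
      exact Set.toFinite _
    have hmaps1 : Set.MapsTo (fun y => Q.pmul fb x y)
        {x : R' | Q.deg x < (m : WithBot ℕ)} {x : R' | Q.deg x < (m : WithBot ℕ)} :=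
      fun y _ => SkewPolyRing.modr_deg_lt Q hδb hf (x * y)
    have hmaps2 : Set.MapsTo (fun y => Q.pmul fb y x)
        {x : R' | Q.deg x < (m : WithBot ℕ)} {x : R' | Q.deg x < (m : WithBot ℕ)} :=
      fun y _ => SkewPolyRing.modr_deg_lt Q hδb hf (y * x)
    have hinj1 : Set.InjOn (fun y => Q.pmul fb x y) {x : R' | Q.deg x < (m : WithBot ℕ)} := by
      intro y hy y' hy' hxy
      by_contra hne
      obtain ⟨q1, h1, -⟩ := SkewPolyRing.modr_spec Q hδb hf (x * y)
      obtain ⟨q2, h2, -⟩ := SkewPolyRing.modr_spec Q hδb hf (x * y')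
      have hMeq : Q.modr fb (x * y) = Q.modr fb (x * y') := hxy
      have hxyz : x * (y - y') = (q1 - q2) * fb := by
        rw [mul_sub, sub_mul]
        calc x * y - x * y' = (q1 * fb + Q.modr fb (x * y)) - (q2 * fb + Q.modr fb (x * y'))
            := by rw [← h1, ← h2]
          _ = q1 * fb - q2 * fb := by rw [hMeq]; abel
      exact hKEY x (y - y') (q1 - q2) hx0 (sub_ne_zero.mpr hne) hx
        (SkewPolyRing.deg_sub_lt Q hy hy') hxyz
    have hinj2 : Set.InjOn (fun y => Q.pmul fb y x) {x : R' | Q.deg x < (m : WithBot ℕ)} := by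
      intro y hy y' hy' hxy
      by_contra hne
      obtain ⟨q1, h1, -⟩ := SkewPolyRing.modr_spec Q hδb hf (y * x)
      obtain ⟨q2, h2, -⟩ := SkewPolyRing.modr_spec Q hδb hf (y' * x)
      have hMeq : Q.modr fb (y * x) = Q.modr fb (y' * x) := hxy
      have hxyz : (y - y') * x = (q1 - q2) * fb := by
        rw [sub_mul, sub_mul]
        calc y * x - y' * x = (q1 * fb + Q.modr fb (y * x)) - (q2 * fb + Q.modr fb (y' * x))
            := by rw [← h1, ← h2]
          _ = q1 * fb - q2 * fb := by rw [hMeq]; abel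
      exact hKEY (y - y') x (q1 - q2) (sub_ne_zero.mpr hne) hx0
        (SkewPolyRing.deg_sub_lt Q hy hy') hx hxyz
    exact ⟨(hfinset.injOn_iff_bijOn_of_mapsTo hmaps1).mp hinj1,
      (hfinset.injOn_iff_bijOn_of_mapsTo hmaps2).mp hinj2⟩
  · -- division algebra → field + irreducible
    intro hdiv
    have hnzd : ∀ a b : 𝓞 K ⧸ pK, a * b = 0 → a = 0 ∨ b = 0 := by
      intro a b hab
      by_contra hcon
      push_neg at hcon
      obtain ⟨ha, hb⟩ := hcon
      have hCa0 : Q.C a ≠ 0 := fun h => ha (hCinj (h.trans (map_zero Q.C).symm))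
      have hCb0 : Q.C b ≠ 0 := fun h => hb (hCinj (h.trans (map_zero Q.C).symm))
      have h1 : Q.pmul fb (Q.C a) (Q.C b) = 0 := by
        show Q.modr fb (Q.C a * Q.C b) = 0
        rw [← map_mul, hab, map_zero, SkewPolyRing.modr_zero Q hδb hf]
      have h2 : Q.pmul fb (Q.C a) 0 = 0 := by
        show Q.modr fb (Q.C a * 0) = 0
        rw [mul_zero, SkewPolyRing.modr_zero Q hδb hf]
      have := (hdiv (Q.C a) (hCmem a) hCa0).1.injOn (hCmem b) hmem0 (h1.trans h2.symm)
      exact hCb0 this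
    have hfield : IsField (𝓞 K ⧸ pK) := by
      haveI : NoZeroDivisors (𝓞 K ⧸ pK) := ⟨fun {a b} h => hnzd a b h⟩
      haveI : IsDomain (𝓞 K ⧸ pK) := NoZeroDivisors.to_isDomain _
      exact Finite.isField_of_domain _
    refine ⟨hfield, ?_, ?_⟩
    · -- not a unit
      rintro ⟨u, hu⟩
      have h1 : fb * ↑u⁻¹ = 1 := by rw [← hu, Units.mul_inv]
      have hv0 : ((↑u⁻¹ : R')) ≠ 0 := by
        intro h
        rw [h, mul_zero] at h1
        exact zero_ne_one h1
      obtain ⟨nv, hnv⟩ := SkewPolyRing.exists_deg Q hv0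
      obtain ⟨hcv, hbv⟩ := (SkewPolyRing.deg_eq_coe_iff Q).mp hnv
      have h2 := (SkewPolyRing.mul_bdd Q hδb (SkewPolyRing.Monic.bddBy Q hf) hbv).2
      rw [h1, hf.2, one_mul, SkewPolyRing.coeff_one, Finsupp.single_apply,
        if_neg (by omega)] at h2
      exact SkewPolyRing.iterate_ne_zero (σ := σb) hσb m hcv h2.symm
    · -- irreducible
      rintro ⟨g, h, hg, hh, hfactor⟩
      have hg0 : g ≠ 0 := by
        rintro rfl
        rw [zero_mul] at hfactor
        have h2 := hf.1
        rw [hfactor, SkewPolyRing.deg_zero] at h2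
        exact WithBot.bot_ne_coe h2
      have hh0 : h ≠ 0 := by
        rintro rfl
        rw [mul_zero] at hfactor
        have h2 := hf.1
        rw [hfactor, SkewPolyRing.deg_zero] at h2
        exact WithBot.bot_ne_coe h2
      have h1 : Q.pmul fb g h = 0 := by
        show Q.modr fb (g * h) = 0
        rw [← hfactor, SkewPolyRing.modr_self Q hδb hf]
      have h2 : Q.pmul fb g 0 = 0 := by
        show Q.modr fb (g * 0) = 0
        rw [mul_zero, SkewPolyRing.modr_zero Q hδb hf]
      have := (hdiv g hg hg0).1.injOn hh hmem0 (h1.trans h2.symm)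
      exact hh0 this
end
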